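/- For any circle graph G with connected components G_1, ..., G_r, the polygon number satisfies ψ(G) = (Σ_{i=1}^r ψ(G_i)) − 2(r−1). -/

import Mathlib

open SimpleGraph

/-- The circle on which chord diagrams live (the unit circle as an additive circle). -/
abbrev Circ : Type := AddCircle (1 : ℝ)

/-- A circle representation of a graph `G`: each vertex `v` gets a chord with
distinct endpoints `p v` and `q v`, all `2|V|` endpoints are distinct, and two
distinct vertices are adjacent iff their chords cross (i.e. exactly one endpoint
of one chord lies strictly inside an arc determined by the other chord). -/
structure CircleRep (V : Type) (G : SimpleGraph V) where
  p : V → Circ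
  q : V → Circ
  inj : Function.Injective (Sum.elim p q)
  adj : ∀ u v : V, G.Adj u v ↔ u ≠ v ∧
    Xor' (sbtw (p v) (p u) (q v)) (sbtw (p v) (q u) (q v))

namespace CircleRep

variable {V : Type} {G : SimpleGraph V} (R : CircleRep V G)

/-- The two open arcs of the chord of `v`: `b = true` is the arc from `p v`
clockwise to `q v`, `b = false` is the other arc. -/
def ArcSet (v : V) (b : Bool) : Set Circ :=
  if b then {x | sbtw (R.p v) x (R.q v)} else {x | sbtw (R.q v) x (R.p v)}

/-- The arc `b` of the chord of `v` is empty: it contains both endpoints of no chord. -/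
def ArcEmpty (v : V) (b : Bool) : Prop :=
  ∀ u : V, ¬ (R.p u ∈ R.ArcSet v b ∧ R.q u ∈ R.ArcSet v b)

/-- A chord is peripheral if one of its arcs is empty. -/
def Peripheral (v : V) : Prop := ∃ b : Bool, R.ArcEmpty v b

/-- A set `T` of corner points satisfies the chord of `v` if each of the two
arcs of the chord contains a corner. -/
def SatChord (T : Finset Circ) (v : V) : Prop :=
  (∃ t ∈ T, t ∈ R.ArcSet v true) ∧ (∃ t ∈ T, t ∈ R.ArcSet v false)

/-- `T` is a satisfying set of corners: the corners are distinct from all chord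
endpoints and every chord has a corner in each of its arcs. -/
def GoodCorners (T : Finset Circ) : Prop :=
  (∀ t ∈ T, ∀ v : V, t ≠ R.p v ∧ t ≠ R.q v) ∧ ∀ v : V, R.SatChord T v

/-- The polygon number `ψ_r` of a circle representation: the minimum number of
corners that must be added to satisfy all chords. -/
noncomputable def polyNum : ℕ :=
  sInf {k | ∃ T : Finset Circ, T.card = k ∧ R.GoodCorners T}

/-- `c 0, …, c (ℓ-1)` is an ℓ-independent set in series: there is a point `x`
on the circle such that a clockwise traversal starting at `x` encounters both
endpoints of `c i` before both endpoints of `c j` whenever `i < j`. -/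
def SeriesIndep {ℓ : ℕ} (c : Fin ℓ → V) : Prop :=
  Function.Injective c ∧ ∃ x : Circ,
    (∀ i : Fin ℓ, x ≠ R.p (c i) ∧ x ≠ R.q (c i)) ∧
    ∀ i j : Fin ℓ, i < j →
      ∀ e ∈ ({R.p (c i), R.q (c i)} : Set Circ),
        ∀ f ∈ ({R.p (c j), R.q (c j)} : Set Circ), sbtw x e f

end CircleRep

/-- The polygon number `ψ(G)`: the minimum `k` such that `G` has a circle
representation together with `k` corners satisfying all chords. -/
noncomputable def polygonNumber {V : Type} (G : SimpleGraph V) : ℕ :=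
  sInf {k | ∃ R : CircleRep V G, ∃ T : Finset Circ, T.card = k ∧ R.GoodCorners T}

/-- A permutation graph: a graph having a circle representation admitting two
corner points such that each chord has one corner in each of its arcs. -/
def IsPermutationGraph {V : Type} (G : SimpleGraph V) : Prop :=
  ∃ R : CircleRep V G, ∃ T : Finset Circ, T.card = 2 ∧ R.GoodCorners T

/-- The clique cover number `κ(G)`: least `n` such that the vertex set can be
partitioned into `n` cliques. -/
noncomputable def cliqueCoverNumber {V : Type} (G : SimpleGraph V) : ℕ :=
  sInf {n | ∃ f : V → Fin n, ∀ u v : V, f u = f v → u = v ∨ G.Adj u v}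

/-- The independence number `α(G)`. -/
noncomputable def indepNumber {V : Type} (G : SimpleGraph V) : ℕ :=
  sSup {n | ∃ s : Finset V, (∀ u ∈ s, ∀ v ∈ s, u ≠ v → ¬ G.Adj u v) ∧ s.card = n}

/-- `A` is an asteroidal set of `G`: for every `a ∈ A`, any two vertices of
`A \ {a}` are connected by a path in `G - N[a]`. -/
def IsAsteroidal {V : Type} (G : SimpleGraph V) (A : Set V) : Prop :=
  ∀ a ∈ A, ∀ x ∈ A, ∀ y ∈ A, x ≠ a → y ≠ a →
    ∃ (hx : x ∈ {w | w ≠ a ∧ ¬ G.Adj a w}) (hy : y ∈ {w | w ≠ a ∧ ¬ G.Adj a w}),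
      (G.induce {w | w ≠ a ∧ ¬ G.Adj a w}).Reachable ⟨x, hx⟩ ⟨y, hy⟩

/-- The asteroidal number `an(G)`: maximum size of an asteroidal set. -/
noncomputable def asteroidalNumber {V : Type} (G : SimpleGraph V) : ℕ :=
  sSup {n | ∃ A : Finset V, IsAsteroidal G ↑A ∧ A.card = n}

/-- `G` is AT-free: it has no asteroidal triple. -/
def ATFree {V : Type} (G : SimpleGraph V) : Prop :=
  ¬ ∃ a b c : V, a ≠ b ∧ a ≠ c ∧ b ≠ c ∧ IsAsteroidal G {a, b, c}

/-- `G` is distance hereditary: in every connected induced subgraph, distances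
agree with those of `G`. -/
def DistanceHereditary {V : Type} (G : SimpleGraph V) : Prop :=
  ∀ s : Set V, (G.induce s).Connected →
    ∀ u v : ↥s, (G.induce s).dist u v = G.dist (u : V) (v : V)

/-- `{V1, V2}` is a split of `G`. -/
def IsSplit {V : Type} (G : SimpleGraph V) (V1 V2 : Set V) : Prop :=
  V1 ∪ V2 = Set.univ ∧ Disjoint V1 V2 ∧ 1 < V1.ncard ∧ 1 < V2.ncard ∧
    ∀ x ∈ V1, ∀ y ∈ V2,
      (G.Adj x y ↔ (∃ y' ∈ V2, G.Adj x y') ∧ (∃ x' ∈ V1, G.Adj x' y))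



namespace CircMaster

noncomputable def lift (w : ℝ) (z : Circ) : ℝ := (AddCircle.equivIco 1 w z : ℝ)

lemma lift_mem (w : ℝ) (z : Circ) : lift w z ∈ Set.Ico w (w + 1) :=
  (AddCircle.equivIco 1 w z).2

lemma lift_coe (w : ℝ) (z : Circ) : ((lift w z : ℝ) : Circ) = z :=
  (AddCircle.equivIco 1 w).symm_apply_apply z

lemma coe_inj {w x y : ℝ} (hx : x ∈ Set.Ico w (w+1)) (hy : y ∈ Set.Ico w (w+1)) :
    (x : Circ) = (y : Circ) ↔ x = y :=
  AddCircle.coe_eq_coe_iff_of_mem_Ico hx hy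

lemma lift_inj (w : ℝ) {z z' : Circ} (h : lift w z = lift w z') : z = z' := by
  rw [← lift_coe w z, ← lift_coe w z', h]

lemma lift_coe_self {w x : ℝ} (hx : x ∈ Set.Ico w (w+1)) : lift w (x : Circ) = x := by
  have := lift_coe w (x : Circ)
  exact (coe_inj (lift_mem w _) hx).1 this

lemma btw_coe_iff {x y z : ℝ} : Btw.btw (x : Circ) (y : Circ) (z : Circ) ↔
    toIcoMod one_pos x y ≤ toIocMod one_pos x z :=
  QuotientAddGroup.btw_coe_iff

lemma sbtw_coe {x y z : ℝ} (h1 : x < y) (h2 : y < z) (h3 : z < x + 1) :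
    sbtw (x : Circ) (y : Circ) (z : Circ) := by
  rw [sbtw_iff_btw_not_btw]
  constructor
  · rw [btw_coe_iff]
    rw [(toIcoMod_eq_self one_pos).2 ⟨h1.le, h2.trans h3⟩,
      (toIocMod_eq_self one_pos).2 ⟨h1.trans h2, h3.le⟩]
    exact h2.le
  · rw [btw_coe_iff]
    have hy : toIcoMod one_pos z y = y + 1 := by
      rw [toIcoMod_eq_iff one_pos]
      constructor
      · constructor <;> [linarith; linarith]
      · exact ⟨-1, by rw [zsmul_eq_mul]; ring⟩
    have hx : toIocMod one_pos z x = x + 1 := by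
      rw [toIocMod_eq_iff one_pos]
      constructor
      · constructor <;> [linarith; linarith]
      · exact ⟨-1, by rw [zsmul_eq_mul]; ring⟩
    rw [hy, hx]
    push_neg
    linarith

/-- cyclic order of three reals -/
def Cyc (x y z : ℝ) : Prop := (x < y ∧ y < z) ∨ (y < z ∧ z < x) ∨ (z < x ∧ x < y)

lemma sbtw_of_cyc {w x y z : ℝ} (hx : x ∈ Set.Ico w (w+1)) (hy : y ∈ Set.Ico w (w+1))
    (hz : z ∈ Set.Ico w (w+1)) (h : Cyc x y z) :
    sbtw (x : Circ) (y : Circ) (z : Circ) := by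
  obtain ⟨hx1, hx2⟩ := hx; obtain ⟨hy1, hy2⟩ := hy; obtain ⟨hz1, hz2⟩ := hz
  rcases h with ⟨h1, h2⟩ | ⟨h1, h2⟩ | ⟨h1, h2⟩
  · exact sbtw_coe h1 h2 (by linarith)
  · exact (sbtw_coe h1 h2 (by linarith)).cyclic_left.cyclic_left
  · exact (sbtw_coe h1 h2 (by linarith)).cyclic_left

lemma cyc_total {x y z : ℝ} (hxy : x ≠ y) (hyz : y ≠ z) (hxz : x ≠ z) :
    Cyc x y z ∨ Cyc x z y := by
  unfold Cyc
  rcases lt_trichotomy x y with h | h | h <;> rcases lt_trichotomy y z with h' | h' | h' <;>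
    rcases lt_trichotomy x z with h'' | h'' | h'' <;> tauto

lemma cyc_asymm {x y z : ℝ} (h : Cyc x y z) : ¬ Cyc x z y := by
  unfold Cyc at *
  rcases h with ⟨h1, h2⟩ | ⟨h1, h2⟩ | ⟨h1, h2⟩ <;> rintro (⟨g1, g2⟩ | ⟨g1, g2⟩ | ⟨g1, g2⟩) <;>
    linarith

lemma sbtw_iff_cyc {w x y z : ℝ} (hx : x ∈ Set.Ico w (w+1)) (hy : y ∈ Set.Ico w (w+1))
    (hz : z ∈ Set.Ico w (w+1)) (hxy : x ≠ y) (hyz : y ≠ z) (hxz : x ≠ z) :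
    sbtw (x : Circ) (y : Circ) (z : Circ) ↔ Cyc x y z := by
  refine ⟨fun h => ?_, sbtw_of_cyc hx hy hz⟩
  rcases cyc_total hxy hyz hxz with hc | hc
  · exact hc
  · exfalso
    have h2 := sbtw_of_cyc hx hz hy hc
    exact h2.not_sbtw h.cyclic_left

end CircMaster

section Trans
open CircMaster

variable {V : Type} {G : SimpleGraph V} (R : CircleRep V G)

lemma CircleRep.pq_ne {u v : V} : R.p u ≠ R.q v := fun h => by
  have := R.inj (a₁ := Sum.inl u) (a₂ := Sum.inr v) (by simpa using h)
  simp at this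

lemma CircleRep.p_inj {u v : V} (h : R.p u = R.p v) : u = v := by
  have := R.inj (a₁ := Sum.inl u) (a₂ := Sum.inl v) (by simpa using h)
  simpa using this

lemma CircleRep.q_inj {u v : V} (h : R.q u = R.q v) : u = v := by
  have := R.inj (a₁ := Sum.inr u) (a₂ := Sum.inr v) (by simpa using h)
  simpa using this

variable (w : ℝ)

/-- lifted endpoints -/
noncomputable def CircleRep.lp (v : V) : ℝ := lift w (R.p v)
noncomputable def CircleRep.lq (v : V) : ℝ := lift w (R.q v)

lemma CircleRep.lp_mem (v : V) : R.lp w v ∈ Set.Ico w (w+1) := lift_mem w _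
lemma CircleRep.lq_mem (v : V) : R.lq w v ∈ Set.Ico w (w+1) := lift_mem w _

lemma CircleRep.lp_lq_ne {u v : V} : R.lp w u ≠ R.lq w v :=
  fun h => R.pq_ne (lift_inj w h)
lemma CircleRep.lp_inj {u v : V} (h : R.lp w u = R.lp w v) : u = v :=
  R.p_inj (lift_inj w h)
lemma CircleRep.lq_inj {u v : V} (h : R.lq w u = R.lq w v) : u = v :=
  R.q_inj (lift_inj w h)

lemma CircleRep.adj_iff_cyc {u v : V} : G.Adj u v ↔ u ≠ v ∧
    Xor' (Cyc (R.lp w v) (R.lp w u) (R.lq w v)) (Cyc (R.lp w v) (R.lq w u) (R.lq w v)) := by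
  rw [R.adj]
  refine and_congr_right fun hne => ?_
  have e1 : R.p v = ((R.lp w v : ℝ) : Circ) := (lift_coe w _).symm
  have e2 : R.q v = ((R.lq w v : ℝ) : Circ) := (lift_coe w _).symm
  have e3 : R.p u = ((R.lp w u : ℝ) : Circ) := (lift_coe w _).symm
  have e4 : R.q u = ((R.lq w u : ℝ) : Circ) := (lift_coe w _).symm
  rw [e1, e2, e3, e4]
  rw [sbtw_iff_cyc (R.lp_mem w v) (R.lp_mem w u) (R.lq_mem w v)
      (fun h => hne (R.lp_inj w h).symm) (R.lp_lq_ne w) (R.lp_lq_ne w),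
    sbtw_iff_cyc (R.lp_mem w v) (R.lq_mem w u) (R.lq_mem w v)
      (R.lp_lq_ne w) (fun h => hne (R.lq_inj w h)) (R.lp_lq_ne w)]

lemma CircleRep.mem_arc_iff {v : V} {z : Circ} (hz1 : z ≠ R.p v) (hz2 : z ≠ R.q v) (b : Bool) :
    z ∈ R.ArcSet v b ↔ if b then Cyc (R.lp w v) (lift w z) (R.lq w v)
      else Cyc (R.lq w v) (lift w z) (R.lp w v) := by
  have e1 : R.p v = ((R.lp w v : ℝ) : Circ) := (lift_coe w _).symm
  have e2 : R.q v = ((R.lq w v : ℝ) : Circ) := (lift_coe w _).symm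
  have e3 : z = ((lift w z : ℝ) : Circ) := (lift_coe w _).symm
  have h1 : lift w z ≠ R.lp w v := fun h => hz1 (lift_inj w h)
  have h2 : lift w z ≠ R.lq w v := fun h => hz2 (lift_inj w h)
  cases b <;> simp only [CircleRep.ArcSet, if_true, if_false, Bool.false_eq_true, Set.mem_setOf_eq]
  · rw [e1, e2, e3, sbtw_iff_cyc (R.lq_mem w v) (lift_mem w z) (R.lp_mem w v)
      h2.symm h1 (Ne.symm (R.lp_lq_ne w)), lift_coe_self (lift_mem w z)]
  · rw [e1, e2, e3, sbtw_iff_cyc (R.lp_mem w v) (lift_mem w z) (R.lq_mem w v)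
      h1.symm h2 (R.lp_lq_ne w), lift_coe_self (lift_mem w z)]

end Trans

section Util
open CircMaster

lemma Cyc.rot {x y z : ℝ} (h : Cyc x y z) : Cyc y z x := by
  unfold Cyc at *; tauto

lemma cyc_iff_of_lt {a b t : ℝ} (h : a < b) : Cyc a t b ↔ a < t ∧ t < b := by
  unfold Cyc; constructor
  · rintro (⟨h1, h2⟩ | ⟨h1, h2⟩ | ⟨h1, h2⟩) <;> constructor <;> linarith
  · tauto

lemma cyc_iff_of_gt {a b t : ℝ} (h : b < a) : Cyc a t b ↔ t < b ∨ a < t := by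
  unfold Cyc; constructor
  · rintro (⟨h1, h2⟩ | ⟨h1, h2⟩ | ⟨h1, h2⟩)
    · left; linarith
    · left; exact h1
    · right; exact h2
  · rintro (h1 | h1)
    · right; left; exact ⟨h1, h⟩
    · right; right; exact ⟨h, h1⟩

variable {V : Type} {G : SimpleGraph V} (R : CircleRep V G)

/-- restriction of a circle representation to an induced subgraph -/
def CircleRep.restrict (s : Set V) : CircleRep s (G.induce s) where
  p v := R.p v.1
  q v := R.q v.1
  inj := by
    rintro (a | a) (b | b) h <;> simp only [Sum.elim_inl, Sum.elim_inr] at h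
    · exact congrArg Sum.inl (Subtype.ext (R.p_inj h))
    · exact absurd h R.pq_ne
    · exact absurd h.symm R.pq_ne
    · exact congrArg Sum.inr (Subtype.ext (R.q_inj h))
  adj u v := by
    have h1 : (G.induce s).Adj u v ↔ G.Adj u.1 v.1 := by
      simp [SimpleGraph.comap_adj]
    rw [h1, R.adj]
    exact and_congr_left' (not_congr Subtype.ext_iff).symm

lemma CircleRep.restrict_arcSet (s : Set V) (v : s) (b : Bool) :
    (R.restrict s).ArcSet v b = R.ArcSet v.1 b := rfl

/-- every arc contains a point avoiding all endpoints -/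
lemma CircleRep.arc_avoid [Fintype V] (v : V) (b : Bool) :
    ∃ z : Circ, z ∈ R.ArcSet v b ∧ ∀ u : V, z ≠ R.p u ∧ z ≠ R.q u := by
  classical
  set s : Circ := if b then R.p v else R.q v with hs
  set e : Circ := if b then R.q v else R.p v with he
  set w : ℝ := lift 0 s with hw
  have hws : (w : Circ) = s := lift_coe 0 s
  have hse : s ≠ e := by
    cases b <;> simp only [hs, he, if_true, if_false, Bool.false_eq_true]
    · exact fun h => R.pq_ne h.symm
    · exact R.pq_ne
  set m : ℝ := lift w e with hm
  have hme : (m : Circ) = e := lift_coe w e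
  have hwm : w < m := by
    rcases (lift_mem w e).1.lt_or_eq with h | h
    · exact h
    · exfalso; apply hse; rw [← hws, ← hme]; exact congrArg _ (h.trans hm.symm)
  set B : Finset ℝ := Finset.univ.image (fun u => R.lp w u) ∪
    Finset.univ.image (fun u => R.lq w u) with hB
  have hinf : (Set.Ioo w m \ (B : Set ℝ)).Nonempty :=
    ((Set.Ioo_infinite hwm).diff (B.finite_toSet)).nonempty
  obtain ⟨t, ⟨ht1, ht2⟩, htB⟩ := hinf
  have htmem : t ∈ Set.Ico w (w + 1) :=
    ⟨ht1.le, lt_of_lt_of_le ht2 (lift_mem w e).2.le⟩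
  have hlift : lift w ((t : ℝ) : Circ) = t := lift_coe_self htmem
  have havoid : ∀ u : V, ((t : ℝ) : Circ) ≠ R.p u ∧ ((t : ℝ) : Circ) ≠ R.q u := by
    intro u
    constructor
    · intro h
      apply htB
      have : t = R.lp w u := by rw [CircleRep.lp, ← h, hlift]
      rw [this, hB]
      simp only [Finset.coe_union, Set.mem_union, Finset.coe_image, Set.mem_image]
      exact Or.inl ⟨u, by simp⟩
    · intro h
      apply htB
      have : t = R.lq w u := by rw [CircleRep.lq, ← h, hlift]
      rw [this, hB]
      simp only [Finset.coe_union, Set.mem_union, Finset.coe_image, Set.mem_image]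
      exact Or.inr ⟨u, by simp⟩
  refine ⟨((t : ℝ) : Circ), ?_, havoid⟩
  rw [R.mem_arc_iff w (havoid v).1 (havoid v).2]
  have hlpw : R.lp w v = (if b then w else m) := by
    cases b <;> simp only [if_true, if_false, Bool.false_eq_true]
    · rw [CircleRep.lp, show R.p v = e by simp [he], hm]
    · rw [CircleRep.lp, show R.p v = s by simp [hs], ← hws, lift_coe_self ⟨le_refl w, by linarith⟩]
  have hlqw : R.lq w v = (if b then m else w) := by
    cases b <;> simp only [if_true, if_false, Bool.false_eq_true]
    · rw [CircleRep.lq, show R.q v = s by simp [hs], ← hws, lift_coe_self ⟨le_refl w, by linarith⟩]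
    · rw [CircleRep.lq, show R.q v = e by simp [he], hm]
  cases b <;> simp only [if_true, if_false, Bool.false_eq_true] at hlpw hlqw ⊢ <;>
    rw [hlpw, hlqw, hlift] <;> exact Or.inl ⟨ht1, ht2⟩

lemma polygonNumber_le_card {V' : Type} {G' : SimpleGraph V'} (R' : CircleRep V' G')
    (T : Finset Circ) (h : R'.GoodCorners T) : polygonNumber G' ≤ T.card :=
  Nat.sInf_le ⟨R', T, rfl, h⟩

lemma exists_good_corners {V' : Type} [Fintype V'] {G' : SimpleGraph V'}
    (R' : CircleRep V' G') : ∃ T : Finset Circ, R'.GoodCorners T := by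
  classical
  choose f hf1 hf2 using fun x : V' × Bool => R'.arc_avoid x.1 x.2
  refine ⟨Finset.univ.image f, ?_, ?_⟩
  · intro t ht v
    simp only [Finset.mem_image] at ht
    obtain ⟨x, _, rfl⟩ := ht
    exact hf2 x v
  · intro v
    constructor
    · exact ⟨f (v, true), Finset.mem_image_of_mem f (Finset.mem_univ _), hf1 (v, true)⟩
    · exact ⟨f (v, false), Finset.mem_image_of_mem f (Finset.mem_univ _), hf1 (v, false)⟩

lemma polygonNumber_attained {V' : Type} [Fintype V'] {G' : SimpleGraph V'}
    (h : Nonempty (CircleRep V' G')) :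
    ∃ R' : CircleRep V' G', ∃ T : Finset Circ, T.card = polygonNumber G' ∧ R'.GoodCorners T := by
  obtain ⟨R'⟩ := h
  obtain ⟨T, hT⟩ := exists_good_corners R'
  have hne : {k | ∃ R'' : CircleRep V' G', ∃ T : Finset Circ, T.card = k ∧ R''.GoodCorners T}.Nonempty :=
    ⟨T.card, R', T, rfl, hT⟩
  obtain ⟨R'', T'', hc, hg⟩ := Nat.sInf_mem hne
  exact ⟨R'', T'', hc, hg⟩

lemma arcs_disjoint {v : V} {z : Circ} (h1 : z ∈ R.ArcSet v true) (h2 : z ∈ R.ArcSet v false) :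
    False := by
  simp only [CircleRep.ArcSet, if_true, if_false, Bool.false_eq_true, Set.mem_setOf_eq] at h1 h2
  exact h1.not_sbtw h2

lemma two_le_good_card {V' : Type} {G' : SimpleGraph V'} (R' : CircleRep V' G')
    (T : Finset Circ) (h : R'.GoodCorners T) (v : V') : 2 ≤ T.card := by
  obtain ⟨t1, ht1, ha1⟩ := (h.2 v).1
  obtain ⟨t2, ht2, ha2⟩ := (h.2 v).2
  refine Finset.one_lt_card.2 ⟨t1, ht1, t2, ht2, ?_⟩
  rintro rfl
  exact arcs_disjoint R' ha1 ha2

end Util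

section PartA
open CircMaster Finset

variable {V : Type} {G : SimpleGraph V} (R : CircleRep V G) (w : ℝ)

noncomputable def CircleRep.lov (v : V) : ℝ := min (R.lp w v) (R.lq w v)
noncomputable def CircleRep.hiv (v : V) : ℝ := max (R.lp w v) (R.lq w v)

lemma CircleRep.lov_lt_hiv (v : V) : R.lov w v < R.hiv w v :=
  min_lt_max.2 (R.lp_lq_ne w)

lemma xor_not_iff {a b : Prop} : Xor' (¬a) (¬b) ↔ Xor' a b := by
  unfold Xor' Xor; tauto

lemma CircleRep.adj_iff_mem {u v : V} : G.Adj u v ↔ u ≠ v ∧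
    Xor' (R.lp w u ∈ Set.Ioo (R.lov w v) (R.hiv w v))
         (R.lq w u ∈ Set.Ioo (R.lov w v) (R.hiv w v)) := by
  rw [R.adj_iff_cyc w]
  refine and_congr_right fun hne => ?_
  rcases lt_or_gt_of_ne (R.lp_lq_ne w (u := v) (v := v)) with h | h
  · have e1 : R.lov w v = R.lp w v := min_eq_left h.le
    have e2 : R.hiv w v = R.lq w v := max_eq_right h.le
    rw [e1, e2, cyc_iff_of_lt h, cyc_iff_of_lt h]
    simp [Set.mem_Ioo]
  · have e1 : R.lov w v = R.lq w v := min_eq_right h.le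
    have e2 : R.hiv w v = R.lp w v := max_eq_left h.le
    have d1 : R.lp w u ≠ R.lq w v := R.lp_lq_ne w
    have d2 : R.lp w u ≠ R.lp w v := fun hh => hne (R.lp_inj w hh)
    have d3 : R.lq w u ≠ R.lq w v := fun hh => hne (R.lq_inj w hh)
    have d4 : R.lq w u ≠ R.lp w v := Ne.symm (R.lp_lq_ne w)
    rw [e1, e2, cyc_iff_of_gt h, cyc_iff_of_gt h, ← xor_not_iff (a := _ ∈ _)]
    have g1 : (¬ R.lp w u ∈ Set.Ioo (R.lq w v) (R.lp w v)) ↔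
        (R.lp w u < R.lq w v ∨ R.lp w v < R.lp w u) := by
      simp only [Set.mem_Ioo, not_and, not_lt]
      constructor
      · intro hh
        rcases lt_or_ge (R.lp w u) (R.lq w v) with h1 | h1
        · exact Or.inl h1
        · exact Or.inr (lt_of_le_of_ne (hh (lt_of_le_of_ne h1 (Ne.symm d1))) (Ne.symm d2))
      · rintro (h1 | h1) h2 <;> [linarith; linarith]
    have g2 : (¬ R.lq w u ∈ Set.Ioo (R.lq w v) (R.lp w v)) ↔
        (R.lq w u < R.lq w v ∨ R.lp w v < R.lq w u) := by
      simp only [Set.mem_Ioo, not_and, not_lt]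
      constructor
      · intro hh
        rcases lt_or_ge (R.lq w u) (R.lq w v) with h1 | h1
        · exact Or.inl h1
        · exact Or.inr (lt_of_le_of_ne (hh (lt_of_le_of_ne h1 (Ne.symm d3))) (Ne.symm d4))
      · rintro (h1 | h1) h2 <;> [linarith; linarith]
    rw [g1, g2]

lemma CircleRep.no_cross_gap {u u' : V} {γ : ℝ} (hadj : G.Adj u u')
    (h1 : R.hiv w u < γ) (h2 : γ < R.lov w u') : False := by
  obtain ⟨-, hx⟩ := (R.adj_iff_mem w).1 hadj.symm
  have : ∃ t ∈ Set.Ioo (R.lov w u) (R.hiv w u), R.lov w u' ≤ t := by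
    rcases hx with ⟨h, -⟩ | ⟨h, -⟩
    · exact ⟨_, h, min_le_left _ _⟩
    · exact ⟨_, h, min_le_right _ _⟩
  obtain ⟨t, ⟨-, ht2⟩, ht3⟩ := this
  linarith

lemma CircleRep.walk_interval {γ : ℝ} {y z : V} (p : G.Walk y z)
    (hy : R.hiv w y < γ) (hz : γ < R.lov w z) :
    ∃ v : V, G.Reachable y v ∧ R.lov w v ≤ γ ∧ γ ≤ R.hiv w v := by
  induction p with
  | nil => exact absurd (hy.trans hz) (R.lov_lt_hiv w _).asymm
  | cons h p ih =>
    rename_i y y' z'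
    rcases lt_or_ge γ (R.lov w y') with h1 | h1
    · exact absurd (R.no_cross_gap w h hy h1) id
    · rcases le_or_gt γ (R.hiv w y') with h2 | h2
      · exact ⟨y', h.reachable, h1, h2⟩
      · obtain ⟨v, hv1, hv2⟩ := ih h2 hz
        exact ⟨v, h.reachable.trans hv1, hv2⟩

lemma CircleRep.not_adj_side {x y : V} (hne : y ≠ x) (hnadj : ¬ G.Adj y x) :
    (R.lp w y ∈ Set.Ioo (R.lov w x) (R.hiv w x)) ↔
    (R.lq w y ∈ Set.Ioo (R.lov w x) (R.hiv w x)) := by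
  rw [R.adj_iff_mem w] at hnadj
  push_neg at hnadj
  have := hnadj hne
  unfold Xor' Xor at this
  tauto

/-- real lemma: points inside an interval are on the same side of any chord with
both endpoints strictly outside the interval. -/
lemma cyc_const_inner {α β a b t t' : ℝ} (hab : a ≠ b)
    (ha : a < α ∨ β < a) (hb : b < α ∨ β < b)
    (ht : t ∈ Set.Ioo α β) (ht' : t' ∈ Set.Ioo α β) :
    Cyc a t b ↔ Cyc a t' b := by
  obtain ⟨ht1, ht2⟩ := ht; obtain ⟨ht1', ht2'⟩ := ht'
  rcases lt_or_gt_of_ne hab with h | h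
  · rw [cyc_iff_of_lt h, cyc_iff_of_lt h]
    rcases ha with ha | ha <;> rcases hb with hb | hb <;>
      constructor <;> rintro ⟨u1, u2⟩ <;> exact ⟨by linarith, by linarith⟩
  · rw [cyc_iff_of_gt h, cyc_iff_of_gt h]
    rcases ha with ha | ha <;> rcases hb with hb | hb <;>
      constructor <;> rintro (u | u)
    all_goals first
      | (left; linarith)
      | (right; linarith)
      | (exfalso; linarith)

/-- real lemma: points outside an interval are on the same side of any chord with
both endpoints inside the interval. -/
lemma cyc_const_outer {α β a b t t' : ℝ} (hab : a ≠ b)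
    (ha : a ∈ Set.Ioo α β) (hb : b ∈ Set.Ioo α β)
    (ht : t < α ∨ β < t) (ht' : t' < α ∨ β < t') :
    Cyc a t b ↔ Cyc a t' b := by
  obtain ⟨ha1, ha2⟩ := ha; obtain ⟨hb1, hb2⟩ := hb
  rcases lt_or_gt_of_ne hab with h | h
  · rw [cyc_iff_of_lt h, cyc_iff_of_lt h]
    constructor <;> rintro ⟨u1, u2⟩ <;> exfalso <;>
      [rcases ht with u | u; rcases ht' with u | u] <;> linarith
  · rw [cyc_iff_of_gt h, cyc_iff_of_gt h]
    constructor <;> intro <;>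
      [rcases ht' with u | u; rcases ht with u | u] <;> [left; right; left; right] <;> linarith

/-- membership version of `cyc_const_inner` -/
lemma mem_const_inner {α β m M t t' : ℝ} (hmM : m < M)
    (hm : m < α ∨ β < m) (hM : M < α ∨ β < M)
    (ht : t ∈ Set.Ioo α β) (ht' : t' ∈ Set.Ioo α β) :
    t ∈ Set.Ioo m M ↔ t' ∈ Set.Ioo m M := by
  obtain ⟨ht1, ht2⟩ := ht; obtain ⟨ht1', ht2'⟩ := ht'
  rcases hm with hm | hm <;> rcases hM with hM | hM <;>
    constructor <;> rintro ⟨u1, u2⟩ <;>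
    first
      | exact ⟨by linarith, by linarith⟩
      | (exfalso; linarith)

lemma CircleRep.cross_side_one {x y z : V} (hadj : G.Adj y z)
    (hy : y ≠ x ∧ ¬ G.Adj y x) (hz : z ≠ x ∧ ¬ G.Adj z x)
    (h : R.lp w y ∈ Set.Ioo (R.lov w x) (R.hiv w x)) :
    R.lp w z ∈ Set.Ioo (R.lov w x) (R.hiv w x) := by
  by_contra hc
  have hyq : R.lq w y ∈ Set.Ioo (R.lov w x) (R.hiv w x) :=
    (R.not_adj_side w hy.1 hy.2).1 h
  have hzq : ¬ R.lq w z ∈ Set.Ioo (R.lov w x) (R.hiv w x) :=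
    fun hh => hc ((R.not_adj_side w hz.1 hz.2).2 hh)
  -- distinctness of z-endpoints from interval bounds
  have hyz : y ≠ z := hadj.ne
  have hxz : x ≠ z := fun hh => hz.1 hh.symm
  have bound_mem : ∀ r : ℝ, (r = R.lp w x ∨ r = R.lq w x) →
      (R.lp w z ≠ r ∧ R.lq w z ≠ r) := by
    rintro r (rfl | rfl)
    · exact ⟨fun hh => hxz (R.lp_inj w hh).symm, Ne.symm (R.lp_lq_ne w)⟩
    · exact ⟨R.lp_lq_ne w, fun hh => hxz (R.lq_inj w hh).symm⟩
  have hlovne : ∀ r : ℝ, (r = R.lp w z ∨ r = R.lq w z) → r < R.lov w x ∨ R.hiv w x < r := by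
    rintro r (rfl | rfl)
    · have h1 := (bound_mem _ (Or.inl rfl)).1
      have h2 := (bound_mem _ (Or.inr rfl)).1
      have : ¬ (R.lov w x < R.lp w z ∧ R.lp w z < R.hiv w x) := fun hh => hc hh
      rcases lt_trichotomy (R.lp w z) (R.lov w x) with u | u | u
      · exact Or.inl u
      · exfalso
        rcases min_cases (R.lp w x) (R.lq w x) with ⟨e, -⟩ | ⟨e, -⟩
        · exact h1 (u.trans e)
        · exact h2 (u.trans e)
      · right
        rcases lt_trichotomy (R.lp w z) (R.hiv w x) with u2 | u2 | u2
        · exact absurd ⟨u, u2⟩ this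
        · exfalso
          rcases max_cases (R.lp w x) (R.lq w x) with ⟨e, -⟩ | ⟨e, -⟩
          · exact h1 (u2.trans e)
          · exact h2 (u2.trans e)
        · exact u2
    · have h1 := (bound_mem _ (Or.inl rfl)).2
      have h2 := (bound_mem _ (Or.inr rfl)).2
      have : ¬ (R.lov w x < R.lq w z ∧ R.lq w z < R.hiv w x) := fun hh => hzq hh
      rcases lt_trichotomy (R.lq w z) (R.lov w x) with u | u | u
      · exact Or.inl u
      · exfalso
        rcases min_cases (R.lp w x) (R.lq w x) with ⟨e, -⟩ | ⟨e, -⟩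
        · exact h1 (u.trans e)
        · exact h2 (u.trans e)
      · right
        rcases lt_trichotomy (R.lq w z) (R.hiv w x) with u2 | u2 | u2
        · exact absurd ⟨u, u2⟩ this
        · exfalso
          rcases max_cases (R.lp w x) (R.lq w x) with ⟨e, -⟩ | ⟨e, -⟩
          · exact h1 (u2.trans e)
          · exact h2 (u2.trans e)
        · exact u2
  -- now chord z has both endpoints strictly outside the interval, y inside
  obtain ⟨-, hxor⟩ := (R.adj_iff_mem w (u := y) (v := z)).1 hadj
  have hsame : (R.lp w y ∈ Set.Ioo (R.lov w z) (R.hiv w z)) ↔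
      (R.lq w y ∈ Set.Ioo (R.lov w z) (R.hiv w z)) := by
    apply mem_const_inner (R.lov_lt_hiv w z) _ _ h hyq
    · rcases min_cases (R.lp w z) (R.lq w z) with ⟨e, -⟩ | ⟨e, -⟩ <;> rw [CircleRep.lov, e]
      · exact hlovne _ (Or.inl rfl)
      · exact hlovne _ (Or.inr rfl)
    · rcases max_cases (R.lp w z) (R.lq w z) with ⟨e, -⟩ | ⟨e, -⟩ <;> rw [CircleRep.hiv, e]
      · exact hlovne _ (Or.inl rfl)
      · exact hlovne _ (Or.inr rfl)
  unfold Xor' Xor at hxor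
  tauto

lemma CircleRep.reach_side {x y z : V} (hyz : G.Reachable y z)
    (hcomp : G.connectedComponentMk y ≠ G.connectedComponentMk x) :
    (R.lp w y ∈ Set.Ioo (R.lov w x) (R.hiv w x)) ↔
    (R.lp w z ∈ Set.Ioo (R.lov w x) (R.hiv w x)) := by
  obtain ⟨p⟩ := hyz
  induction p with
  | nil => rfl
  | cons h p ih =>
    rename_i y y' z'
    have hy'c : G.connectedComponentMk y' = G.connectedComponentMk y :=
      (SimpleGraph.ConnectedComponent.sound h.reachable).symm
    have hstep : ∀ a : V, G.connectedComponentMk a ≠ G.connectedComponentMk x →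
        a ≠ x ∧ ¬ G.Adj a x := by
      intro a ha
      refine ⟨fun hh => ha (by rw [hh]), fun hh => ha ?_⟩
      exact SimpleGraph.ConnectedComponent.sound hh.reachable
    have h1 : (R.lp w y ∈ Set.Ioo (R.lov w x) (R.hiv w x)) ↔
        (R.lp w y' ∈ Set.Ioo (R.lov w x) (R.hiv w x)) := by
      constructor
      · exact R.cross_side_one w h (hstep y hcomp) (hstep y' (hy'c.trans_ne hcomp))
      · exact R.cross_side_one w h.symm (hstep y' (hy'c.trans_ne hcomp)) (hstep y hcomp)
    exact h1.trans (ih (hy'c.trans_ne hcomp))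

lemma CircleRep.comp_side {x u u' : V}
    (hcomp : G.connectedComponentMk u = G.connectedComponentMk u')
    (hnex : G.connectedComponentMk u ≠ G.connectedComponentMk x) :
    ((R.lp w u ∈ Set.Ioo (R.lov w x) (R.hiv w x)) ↔
      (R.lp w u' ∈ Set.Ioo (R.lov w x) (R.hiv w x))) ∧
    ((R.lp w u ∈ Set.Ioo (R.lov w x) (R.hiv w x)) ↔
      (R.lq w u' ∈ Set.Ioo (R.lov w x) (R.hiv w x))) := by
  have hr : G.Reachable u u' := SimpleGraph.ConnectedComponent.exact hcomp
  have h1 := R.reach_side w hr hnex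
  have hu'c : G.connectedComponentMk u' ≠ G.connectedComponentMk x := hcomp ▸ hnex
  have hstep : u' ≠ x ∧ ¬ G.Adj u' x := by
    refine ⟨fun hh => hu'c (by rw [hh]), fun hh => hu'c ?_⟩
    exact SimpleGraph.ConnectedComponent.sound hh.reachable
  exact ⟨h1, h1.trans (R.not_adj_side w hstep.1 hstep.2)⟩

end PartA

section PartAMain
open CircMaster Finset

variable {V : Type} {G : SimpleGraph V} (R : CircleRep V G) (w : ℝ)

lemma CircleRep.mem_arc_true_iff {v : V} {z : Circ} (hz1 : z ≠ R.p v) (hz2 : z ≠ R.q v) :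
    z ∈ R.ArcSet v true ↔ Cyc (R.lp w v) (lift w z) (R.lq w v) := by
  simpa using R.mem_arc_iff w hz1 hz2 true

lemma CircleRep.mem_arc_false_iff {v : V} {z : Circ} (hz1 : z ≠ R.p v) (hz2 : z ≠ R.q v) :
    z ∈ R.ArcSet v false ↔ Cyc (R.lq w v) (lift w z) (R.lp w v) := by
  simpa using R.mem_arc_iff w hz1 hz2 false

lemma partA {V : Type} [Fintype V] {G : SimpleGraph V} (R : CircleRep V G) :
    ∀ (N : ℕ) (T : Finset Circ),
      (∀ t ∈ T, ∀ v : V, t ≠ R.p v ∧ t ≠ R.q v) →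
      ∀ S : Finset G.ConnectedComponent, S.Nonempty → S.card ≤ N →
      (∀ v : V, G.connectedComponentMk v ∈ S → R.SatChord T v) →
      (∑ c ∈ S, polygonNumber (G.induce c.supp)) + 2 ≤ T.card + 2 * S.card := by
  classical
  intro N
  induction N with
  | zero =>
    intro T hT S hSne hScard hsat
    have := Finset.card_pos.2 hSne
    omega
  | succ N ih =>
    intro T hT S hSne hScard hsat
    by_cases hS1 : S.card ≤ 1
    · -- single component
      have : S.card = 1 := le_antisymm hS1 (Finset.card_pos.2 hSne)
      obtain ⟨c, rfl⟩ := Finset.card_eq_one.1 this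
      have hgood : (R.restrict c.supp).GoodCorners T := by
        refine ⟨fun t ht v => hT t ht v.1, fun v => ?_⟩
        exact hsat v.1 (by
          rw [(SimpleGraph.ConnectedComponent.mem_supp_iff c v.1).1 v.2]
          exact Finset.mem_singleton_self c)
      have h1 : polygonNumber (G.induce c.supp) ≤ T.card :=
        polygonNumber_le_card (R.restrict c.supp) T hgood
      rw [Finset.sum_singleton, Finset.card_singleton]
      omega
    · -- at least two components
      push_neg at hS1
      -- choose a base point avoiding all endpoints
      set bad : Finset ℝ := Finset.univ.image (R.lp 0) ∪ Finset.univ.image (R.lq 0) with hbad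
      obtain ⟨w, hw01, hwbad⟩ :=
        ((Set.Ioo_infinite (zero_lt_one (α := ℝ))).diff bad.finite_toSet).nonempty
      have hwIco : w ∈ Set.Ico (0:ℝ) (0 + 1) := ⟨hw01.1.le, by simpa using hw01.2⟩
      have hw0 : ∀ v : V, ((w : ℝ) : Circ) ≠ R.p v ∧ ((w : ℝ) : Circ) ≠ R.q v := by
        intro v
        constructor
        · intro h
          exact hwbad (by
            have : w = R.lp 0 v := by rw [CircleRep.lp, ← h, lift_coe_self hwIco]
            rw [this, hbad]
            simp only [Finset.coe_union, Set.mem_union, Finset.coe_image, Set.mem_image]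
            exact Or.inl ⟨v, by simp⟩)
        · intro h
          exact hwbad (by
            have : w = R.lq 0 v := by rw [CircleRep.lq, ← h, lift_coe_self hwIco]
            rw [this, hbad]
            simp only [Finset.coe_union, Set.mem_union, Finset.coe_image, Set.mem_image]
            exact Or.inr ⟨v, by simp⟩)
      -- lifted endpoints are strictly above w
      have hstrict : ∀ v : V, w < R.lp w v ∧ w < R.lq w v := by
        intro v
        constructor
        · rcases (R.lp_mem w v).1.lt_or_eq with h | h
          · exact h
          · exact absurd (by rw [h, CircleRep.lp, lift_coe] : ((w:ℝ):Circ) = R.p v) (hw0 v).1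
        · rcases (R.lq_mem w v).1.lt_or_eq with h | h
          · exact h
          · exact absurd (by rw [h, CircleRep.lq, lift_coe] : ((w:ℝ):Circ) = R.q v) (hw0 v).2
      -- component endpoint sets
      set Vc : G.ConnectedComponent → Finset V :=
        fun c => Finset.univ.filter (fun v => G.connectedComponentMk v = c) with hVc
      set Ec : G.ConnectedComponent → Finset ℝ :=
        fun c => (Vc c).image (R.lp w) ∪ (Vc c).image (R.lq w) with hEc
      have hEc_mem : ∀ (c : G.ConnectedComponent) (θ : ℝ), θ ∈ Ec c ↔
          ∃ v : V, G.connectedComponentMk v = c ∧ (θ = R.lp w v ∨ θ = R.lq w v) := by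
        intro c θ
        rw [hEc]
        simp only [Finset.mem_union, Finset.mem_image, hVc, Finset.mem_filter,
          Finset.mem_univ, true_and]
        constructor
        · rintro (⟨v, hv, rfl⟩ | ⟨v, hv, rfl⟩)
          · exact ⟨v, hv, Or.inl rfl⟩
          · exact ⟨v, hv, Or.inr rfl⟩
        · rintro ⟨v, hv, rfl | rfl⟩
          · exact Or.inl ⟨v, hv, rfl⟩
          · exact Or.inr ⟨v, hv, rfl⟩
      have hEcne : ∀ c : G.ConnectedComponent, (Ec c).Nonempty := by
        intro c
        obtain ⟨v, hv⟩ := c.exists_rep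
        exact ⟨R.lp w v, (hEc_mem c _).2 ⟨v, hv, Or.inl rfl⟩⟩
      set alf : G.ConnectedComponent → ℝ := fun c => (Ec c).min' (hEcne c) with half
      set bet : G.ConnectedComponent → ℝ := fun c => (Ec c).max' (hEcne c) with hbet
      have halfmem : ∀ c, alf c ∈ Ec c := fun c => Finset.min'_mem _ _
      have hbetmem : ∀ c, bet c ∈ Ec c := fun c => Finset.max'_mem _ _
      have halfbet : ∀ c, alf c < bet c := by
        intro c
        obtain ⟨v, hv⟩ := c.exists_rep
        exact Finset.min'_lt_max' _ ((hEc_mem c _).2 ⟨v, hv, Or.inl rfl⟩)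
          ((hEc_mem c _).2 ⟨v, hv, Or.inr rfl⟩) (R.lp_lq_ne w)
      have hEcw : ∀ c, ∀ θ ∈ Ec c, w < θ ∧ θ < w + 1 := by
        intro c θ hθ
        obtain ⟨v, -, rfl | rfl⟩ := (hEc_mem c θ).1 hθ
        · exact ⟨(hstrict v).1, (R.lp_mem w v).2⟩
        · exact ⟨(hstrict v).2, (R.lq_mem w v).2⟩
      have hdiff : ∀ {c c' : G.ConnectedComponent}, c ≠ c' → ∀ θ θ' : ℝ,
          θ ∈ Ec c → θ' ∈ Ec c' → θ ≠ θ' := by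
        intro c c' hcc θ θ' hθ hθ'
        obtain ⟨v, hv, hθeq⟩ := (hEc_mem c θ).1 hθ
        obtain ⟨v', hv', hθ'eq⟩ := (hEc_mem c' θ').1 hθ'
        have hvv' : v ≠ v' := fun h => hcc (by rw [← hv, ← hv', h])
        rcases hθeq with rfl | rfl <;> rcases hθ'eq with rfl | rfl
        · exact fun h => hvv' (R.lp_inj w h)
        · exact R.lp_lq_ne w
        · exact Ne.symm (R.lp_lq_ne w)
        · exact fun h => hvv' (R.lq_inj w h)
      -- interval coverage of the span of a component
      have hcover : ∀ (c : G.ConnectedComponent) (γ : ℝ), alf c ≤ γ → γ ≤ bet c →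
          ∃ v : V, G.connectedComponentMk v = c ∧ R.lov w v ≤ γ ∧ γ ≤ R.hiv w v := by
        intro c γ h1 h2
        obtain ⟨va, hva, hvaθ⟩ := (hEc_mem c (alf c)).1 (halfmem c)
        obtain ⟨vb, hvb, hvbθ⟩ := (hEc_mem c (bet c)).1 (hbetmem c)
        have hva2 : R.lov w va ≤ γ := by
          rcases hvaθ with h | h
          · exact le_trans (by rw [h]; exact min_le_left _ _) h1
          · exact le_trans (by rw [h]; exact min_le_right _ _) h1
        have hvb2 : γ ≤ R.hiv w vb := by
          rcases hvbθ with h | h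
          · exact le_trans h2 (by rw [h]; exact le_max_left _ _)
          · exact le_trans h2 (by rw [h]; exact le_max_right _ _)
        rcases le_or_gt γ (R.hiv w va) with h3 | h3
        · exact ⟨va, hva, hva2, h3⟩
        rcases le_or_gt (R.lov w vb) γ with h4 | h4
        · exact ⟨vb, hvb, h4, hvb2⟩
        obtain ⟨p⟩ : G.Reachable va vb :=
          SimpleGraph.ConnectedComponent.exact (hva.trans hvb.symm)
        obtain ⟨v, hv1, hv2, hv3⟩ := R.walk_interval w p h3 h4
        exact ⟨v, (SimpleGraph.ConnectedComponent.sound hv1).symm.trans hva, hv2, hv3⟩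
      -- a component of minimal span
      obtain ⟨c₀, hc₀S, hc₀min⟩ := S.exists_min_image (fun c => bet c - alf c) hSne
      -- no other S-component has an endpoint inside the span of c₀
      have hforeign : ∀ c' ∈ S, c' ≠ c₀ → ∀ θ ∈ Ec c', θ ∉ Set.Ioo (alf c₀) (bet c₀) := by
        intro c' hc'S hne θ hθ hmem
        obtain ⟨x, hx, hx1, hx2⟩ := hcover c₀ θ hmem.1.le hmem.2.le
        obtain ⟨v', hv', hθ'⟩ := (hEc_mem c' θ).1 hθ
        have hlovEc : R.lov w x ∈ Ec c₀ := by
          rcases min_cases (R.lp w x) (R.lq w x) with ⟨e, -⟩ | ⟨e, -⟩ <;>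
            rw [CircleRep.lov, e] <;> exact (hEc_mem c₀ _).2 ⟨x, hx, by tauto⟩
        have hhivEc : R.hiv w x ∈ Ec c₀ := by
          rcases max_cases (R.lp w x) (R.lq w x) with ⟨e, -⟩ | ⟨e, -⟩ <;>
            rw [CircleRep.hiv, e] <;> exact (hEc_mem c₀ _).2 ⟨x, hx, by tauto⟩
        have hθo : θ ∈ Set.Ioo (R.lov w x) (R.hiv w x) :=
          ⟨lt_of_le_of_ne hx1 (hdiff (Ne.symm hne) _ _ hlovEc hθ),
          lt_of_le_of_ne hx2 (hdiff hne _ _ hθ hhivEc)⟩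
        have hxside : G.connectedComponentMk v' ≠ G.connectedComponentMk x := by
          rw [hv', hx]; exact hne
        -- one endpoint of v' is inside, hence lp v' is inside
        have hv'p : R.lp w v' ∈ Set.Ioo (R.lov w x) (R.hiv w x) := by
          rcases hθ' with rfl | rfl
          · exact hθo
          · exact ((R.comp_side w rfl hxside).2).2 hθo
        -- propagate to all endpoints of all vertices of c'
        have hall : ∀ θ'' ∈ Ec c', θ'' ∈ Set.Ioo (R.lov w x) (R.hiv w x) := by
          intro θ'' hθ''
          obtain ⟨u, hu, hθ''eq⟩ := (hEc_mem c' θ'').1 hθ''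
          have hcomp : G.connectedComponentMk v' = G.connectedComponentMk u :=
            hv'.trans hu.symm
          have hside := R.comp_side w hcomp hxside
          rcases hθ''eq with rfl | rfl
          · exact hside.1.1 hv'p
          · exact hside.2.1 hv'p
        -- the span of c' is strictly inside the span of c₀: contradiction to minimality
        have h1 := hall (alf c') (halfmem c')
        have h2 := hall (bet c') (hbetmem c')
        have h3 : alf c₀ ≤ R.lov w x := Finset.min'_le _ _ hlovEc
        have h4 : R.hiv w x ≤ bet c₀ := Finset.le_max' _ _ hhivEc
        have h5 := hc₀min c' hc'S
        simp only [Set.mem_Ioo] at h1 h2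
        linarith
      -- helper: lifts of corners differ from all endpoint lifts
      have hTavoid : ∀ t ∈ T, ∀ c, ∀ θ ∈ Ec c, lift w t ≠ θ := by
        intro t ht c θ hθ
        obtain ⟨v, -, rfl | rfl⟩ := (hEc_mem c θ).1 hθ
        · exact fun h => (hT t ht v).1 (lift_inj w h)
        · exact fun h => (hT t ht v).2 (lift_inj w h)
      -- split the corners
      set Tin := T.filter (fun t => lift w t ∈ Set.Ioo (alf c₀) (bet c₀)) with hTinDef
      set Tout := T.filter (fun t => lift w t ∉ Set.Ioo (alf c₀) (bet c₀)) with hToutDef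
      have hTsplit : Tin.card + Tout.card = T.card :=
        Finset.card_filter_add_card_filter_not _
      -- generic side analysis for a chord of c₀
      have side_case : ∀ A B tt : ℝ, A ∈ Ec c₀ → B ∈ Ec c₀ → A ≠ B →
          Cyc A tt B → (tt ∈ Set.Ioo (alf c₀) (bet c₀) ∨ Cyc A w B) := by
        intro A B tt hA hB hAB hcyc
        rcases lt_or_gt_of_ne hAB with h | h
        · left
          rw [cyc_iff_of_lt h] at hcyc
          exact ⟨lt_of_le_of_lt (Finset.min'_le _ _ hA) hcyc.1,
            lt_of_lt_of_le hcyc.2 (Finset.le_max' _ _ hB)⟩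
        · right
          rw [cyc_iff_of_gt h]
          exact Or.inl (hEcw c₀ B hB).1
      have hwmem : w ∈ Set.Ico w (w + 1) := ⟨le_refl w, by linarith⟩
      have hliftw : lift w ((w : ℝ) : Circ) = w := lift_coe_self hwmem
      -- the polygon number of the minimal component is at most #Tin + 1
      have hc₀bound : polygonNumber (G.induce c₀.supp) ≤ Tin.card + 1 := by
        refine le_trans (polygonNumber_le_card (R.restrict c₀.supp)
          (insert ((w : ℝ) : Circ) Tin) ⟨?_, ?_⟩) ?_
        · intro t ht v
          rcases Finset.mem_insert.1 ht with rfl | ht'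
          · exact hw0 v.1
          · exact hT t (Finset.mem_filter.1 ht').1 v.1
        · intro v
          have hvc : G.connectedComponentMk v.1 = c₀ :=
            (SimpleGraph.ConnectedComponent.mem_supp_iff c₀ v.1).1 v.2
          have hsatv := hsat v.1 (by rw [hvc]; exact hc₀S)
          have hlpEc : R.lp w v.1 ∈ Ec c₀ := (hEc_mem c₀ _).2 ⟨v.1, hvc, Or.inl rfl⟩
          have hlqEc : R.lq w v.1 ∈ Ec c₀ := (hEc_mem c₀ _).2 ⟨v.1, hvc, Or.inr rfl⟩
          constructor
          · obtain ⟨t, htT, hta⟩ := hsatv.1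
            have htne := hT t htT v.1
            rw [R.mem_arc_true_iff w htne.1 htne.2] at hta
            rcases side_case _ _ _ hlpEc hlqEc (R.lp_lq_ne w) hta with hin | hcw
            · exact ⟨t, Finset.mem_insert_of_mem (Finset.mem_filter.2 ⟨htT, hin⟩),
                (by rw [R.restrict_arcSet, R.mem_arc_true_iff w htne.1 htne.2]; exact hta)⟩
            · refine ⟨((w : ℝ) : Circ), Finset.mem_insert_self _ _, ?_⟩
              rw [R.restrict_arcSet, R.mem_arc_true_iff w (hw0 v.1).1 (hw0 v.1).2, hliftw]
              exact hcw
          · obtain ⟨t, htT, hta⟩ := hsatv.2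
            have htne := hT t htT v.1
            rw [R.mem_arc_false_iff w htne.1 htne.2] at hta
            rcases side_case _ _ _ hlqEc hlpEc (Ne.symm (R.lp_lq_ne w)) hta with hin | hcw
            · exact ⟨t, Finset.mem_insert_of_mem (Finset.mem_filter.2 ⟨htT, hin⟩),
                (by rw [R.restrict_arcSet, R.mem_arc_false_iff w htne.1 htne.2]; exact hta)⟩
            · refine ⟨((w : ℝ) : Circ), Finset.mem_insert_self _ _, ?_⟩
              rw [R.restrict_arcSet, R.mem_arc_false_iff w (hw0 v.1).1 (hw0 v.1).2, hliftw]
              exact hcw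
        · exact le_trans (Finset.card_insert_le _ _) (by omega)
      -- replacement corner inside the span of c₀
      set bad2 : Finset ℝ := Finset.univ.image (R.lp w) ∪ Finset.univ.image (R.lq w) with hbad2
      obtain ⟨ts, htsIoo, htsbad⟩ :=
        ((Set.Ioo_infinite (halfbet c₀)).diff bad2.finite_toSet).nonempty
      have htsw : ts ∈ Set.Ico w (w + 1) := by
        have h1 := (hEcw c₀ _ (halfmem c₀)).1
        have h2 := (hEcw c₀ _ (hbetmem c₀)).2
        exact ⟨le_of_lt (h1.trans htsIoo.1), htsIoo.2.trans h2⟩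
      set z1 : Circ := ((ts : ℝ) : Circ) with hz1def
      have hliftz1 : lift w z1 = ts := lift_coe_self htsw
      have hz1 : ∀ v : V, z1 ≠ R.p v ∧ z1 ≠ R.q v := by
        intro v
        constructor
        · intro h
          refine htsbad ?_
          have : ts = R.lp w v := by rw [CircleRep.lp, ← h, hz1def, hliftz1]
          rw [this, hbad2]
          simp only [Finset.coe_union, Set.mem_union, Finset.coe_image, Set.mem_image]
          exact Or.inl ⟨v, by simp⟩
        · intro h
          refine htsbad ?_
          have : ts = R.lq w v := by rw [CircleRep.lq, ← h, hz1def, hliftz1]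
          rw [this, hbad2]
          simp only [Finset.coe_union, Set.mem_union, Finset.coe_image, Set.mem_image]
          exact Or.inr ⟨v, by simp⟩
      -- recursive data
      set S' := S.erase c₀ with hS'def
      set T' := insert z1 Tout with hT'def
      have hT' : ∀ t ∈ T', ∀ v : V, t ≠ R.p v ∧ t ≠ R.q v := by
        intro t ht v
        rcases Finset.mem_insert.1 ht with rfl | ht'
        · exact hz1 v
        · exact hT t (Finset.mem_filter.1 ht').1 v
      have hcS' : S'.card = S.card - 1 := Finset.card_erase_of_mem hc₀S
      have hS'ne : S'.Nonempty := Finset.card_pos.1 (by omega)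
      have hS'card : S'.card ≤ N := by omega
      have hsat' : ∀ v : V, G.connectedComponentMk v ∈ S' → R.SatChord T' v := by
        intro v hv
        have hvS : G.connectedComponentMk v ∈ S := Finset.mem_of_mem_erase hv
        have hvne : G.connectedComponentMk v ≠ c₀ := Finset.ne_of_mem_erase hv
        have horig := hsat v hvS
        have houter : ∀ θ : ℝ, (θ = R.lp w v ∨ θ = R.lq w v) →
            θ < alf c₀ ∨ bet c₀ < θ := by
          intro θ hθ
          have hθEc : θ ∈ Ec (G.connectedComponentMk v) :=
            (hEc_mem _ _).2 ⟨v, rfl, hθ⟩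
          have hno := hforeign _ hvS hvne θ hθEc
          have hne1 : θ ≠ alf c₀ := hdiff hvne _ _ hθEc (halfmem c₀)
          have hne2 : θ ≠ bet c₀ := hdiff hvne _ _ hθEc (hbetmem c₀)
          simp only [Set.mem_Ioo, not_and, not_lt] at hno
          rcases lt_trichotomy θ (alf c₀) with h | h | h
          · exact Or.inl h
          · exact absurd h hne1
          · exact Or.inr (lt_of_le_of_ne (hno h) (Ne.symm hne2))
        constructor
        · obtain ⟨t, htT, hta⟩ := horig.1
          have htne := hT t htT v
          rw [R.mem_arc_true_iff w htne.1 htne.2] at hta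
          by_cases hin : lift w t ∈ Set.Ioo (alf c₀) (bet c₀)
          · refine ⟨z1, Finset.mem_insert_self _ _, ?_⟩
            rw [R.mem_arc_true_iff w (hz1 v).1 (hz1 v).2, hliftz1]
            exact (cyc_const_inner (R.lp_lq_ne w) (houter _ (Or.inl rfl))
              (houter _ (Or.inr rfl)) hin htsIoo).1 hta
          · exact ⟨t, Finset.mem_insert_of_mem (Finset.mem_filter.2 ⟨htT, hin⟩),
              (R.mem_arc_true_iff w htne.1 htne.2).2 hta⟩
        · obtain ⟨t, htT, hta⟩ := horig.2
          have htne := hT t htT v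
          rw [R.mem_arc_false_iff w htne.1 htne.2] at hta
          by_cases hin : lift w t ∈ Set.Ioo (alf c₀) (bet c₀)
          · refine ⟨z1, Finset.mem_insert_self _ _, ?_⟩
            rw [R.mem_arc_false_iff w (hz1 v).1 (hz1 v).2, hliftz1]
            exact (cyc_const_inner (Ne.symm (R.lp_lq_ne w)) (houter _ (Or.inr rfl))
              (houter _ (Or.inl rfl)) hin htsIoo).1 hta
          · exact ⟨t, Finset.mem_insert_of_mem (Finset.mem_filter.2 ⟨htT, hin⟩),
              (R.mem_arc_false_iff w htne.1 htne.2).2 hta⟩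
      have hrec := ih T' hT' S' hS'ne hS'card hsat'
      have hsum : (∑ c ∈ S', polygonNumber (G.induce c.supp)) + polygonNumber (G.induce c₀.supp)
          = ∑ c ∈ S, polygonNumber (G.induce c.supp) := Finset.sum_erase_add S _ hc₀S
      have hcT' : T'.card ≤ Tout.card + 1 := Finset.card_insert_le _ _
      omega

end PartAMain

section Glue
open CircMaster

/-- piecewise affine map squeezing the cut circle `(w2, w2+1) \ {m}` into
`(-hi, -lo) ∪ (lo, hi)` -/
noncomputable def gmap (w2 m lo hi : ℝ) (y : ℝ) : ℝ :=
  if y < m then -hi + (hi - lo) * ((y - w2) / (m - w2))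
  else lo + (hi - lo) * ((y - m) / (w2 + 1 - m))

variable {w2 m lo hi : ℝ}

lemma gmap_left (hlohi : lo < hi) {y : ℝ} (hy : y ∈ Set.Ioo w2 m) :
    gmap w2 m lo hi y ∈ Set.Ioo (-hi) (-lo) := by
  obtain ⟨hya, hyb⟩ := hy
  rw [gmap, if_pos hyb]
  have hd : 0 < m - w2 := by linarith
  have hθ1 : 0 < (y - w2) / (m - w2) := div_pos (by linarith) hd
  have hθ2 : (y - w2) / (m - w2) < 1 := (div_lt_one hd).2 (by linarith)
  constructor
  · nlinarith
  · nlinarith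

lemma gmap_right (hlohi : lo < hi) {y : ℝ} (hy : y ∈ Set.Ioo m (w2 + 1)) :
    gmap w2 m lo hi y ∈ Set.Ioo lo hi := by
  obtain ⟨hya, hyb⟩ := hy
  rw [gmap, if_neg (not_lt.2 hya.le)]
  have hd : 0 < w2 + 1 - m := by linarith
  have hθ1 : 0 < (y - m) / (w2 + 1 - m) := div_pos (by linarith) hd
  have hθ2 : (y - m) / (w2 + 1 - m) < 1 := (div_lt_one hd).2 (by linarith)
  constructor
  · nlinarith
  · nlinarith

lemma gmap_mem (h1 : w2 < m) (hlo : 0 < lo) (hlohi : lo < hi) {y : ℝ} (hy : y ∈ Set.Ioo w2 (w2 + 1)) (hym : y ≠ m) :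
    gmap w2 m lo hi y ∈ Set.Ioo (-hi) (-lo) ∪ Set.Ioo lo hi := by
  rcases lt_or_gt_of_ne hym with h | h
  · exact Or.inl (gmap_left hlohi ⟨hy.1, h⟩)
  · exact Or.inr (gmap_right hlohi ⟨h, hy.2⟩)

lemma gmap_mono (h1 : w2 < m) (h2 : m < w2 + 1) (hlo : 0 < lo) (hlohi : lo < hi) {y1 y2 : ℝ} (hy1 : y1 ∈ Set.Ioo w2 (w2 + 1)) (hy2 : y2 ∈ Set.Ioo w2 (w2 + 1))
    (hm1 : y1 ≠ m) (hm2 : y2 ≠ m) (h : y1 < y2) :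
    gmap w2 m lo hi y1 < gmap w2 m lo hi y2 := by
  obtain ⟨hy1a, hy1b⟩ := hy1
  obtain ⟨hy2a, hy2b⟩ := hy2
  have hd : 0 < m - w2 := by linarith
  have hd' : 0 < w2 + 1 - m := by linarith
  have hpos : 0 < hi - lo := by linarith
  rcases lt_or_gt_of_ne hm1 with hl1 | hr1 <;> rcases lt_or_gt_of_ne hm2 with hl2 | hr2
  · rw [gmap, gmap, if_pos hl1, if_pos hl2]
    have : (y1 - w2) / (m - w2) < (y2 - w2) / (m - w2) := by
      apply div_lt_div_of_pos_right ?_ hd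
      linarith
    nlinarith
  · have g1 := gmap_left hlohi (⟨hy1a, hl1⟩ : y1 ∈ Set.Ioo w2 m)
    have g2 := gmap_right hlohi (⟨hr2, hy2b⟩ : y2 ∈ Set.Ioo m (w2 + 1))
    have := g1.2; have := g2.1
    linarith
  · linarith
  · rw [gmap, gmap, if_neg (not_lt.2 hr1.le), if_neg (not_lt.2 hr2.le)]
    have : (y1 - m) / (w2 + 1 - m) < (y2 - m) / (w2 + 1 - m) := by
      apply div_lt_div_of_pos_right ?_ hd'
      linarith
    nlinarith

lemma gmap_pair_iff (h1 : w2 < m) (h2 : m < w2 + 1) (hlo : 0 < lo) (hlohi : lo < hi) {y1 y2 : ℝ} (hy1 : y1 ∈ Set.Ioo w2 (w2 + 1)) (hy2 : y2 ∈ Set.Ioo w2 (w2 + 1))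
    (hm1 : y1 ≠ m) (hm2 : y2 ≠ m) :
    y1 < y2 ↔ gmap w2 m lo hi y1 < gmap w2 m lo hi y2 := by
  constructor
  · exact gmap_mono h1 h2 hlo hlohi hy1 hy2 hm1 hm2
  · intro h
    rcases lt_trichotomy y1 y2 with h' | h' | h'
    · exact h'
    · exact absurd h (by rw [h']; exact lt_irrefl _)
    · exact absurd h (not_lt.2 (gmap_mono h1 h2 hlo hlohi hy2 hy1 hm2 hm1 h').le)

lemma cyc_map {x y z fx fy fz : ℝ} (h1 : x < y ↔ fx < fy) (h2 : y < z ↔ fy < fz)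
    (h3 : z < x ↔ fz < fx) : Cyc x y z ↔ Cyc fx fy fz := by
  unfold Cyc; rw [h1, h2, h3]

end Glue

section PartB
open CircMaster Finset

lemma half_lt : (-(1/2) : ℝ) + 1 = 1/2 := by norm_num

lemma partB {V : Type} [Fintype V] {G : SimpleGraph V} [Fintype G.ConnectedComponent]
    (hcirc : Nonempty (CircleRep V G)) :
    polygonNumber G + 2 * Fintype.card G.ConnectedComponent ≤
      (∑ c : G.ConnectedComponent, polygonNumber (G.induce c.supp)) + 2 := by
  classical
  obtain ⟨R0⟩ := hcirc
  have hopt : ∀ c : G.ConnectedComponent, ∃ (Rc : CircleRep c.supp (G.induce c.supp))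
      (Tc : Finset Circ), Tc.card = polygonNumber (G.induce c.supp) ∧ Rc.GoodCorners Tc :=
    fun c => polygonNumber_attained ⟨R0.restrict c.supp⟩
  choose Rc Tc hTcard hTgood using hopt
  have h2le : ∀ c, 2 ≤ (Tc c).card := by
    intro c
    obtain ⟨v, hv⟩ := c.exists_rep
    exact two_le_good_card (Rc c) (Tc c) (hTgood c)
      ⟨v, (SimpleGraph.ConnectedComponent.mem_supp_iff c v).2 hv⟩
  have hu : ∀ c, ∃ u1 ∈ Tc c, ∃ u2 ∈ Tc c, u1 ≠ u2 := fun c => Finset.one_lt_card.1 (h2le c)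
  choose u1 hu1 u2 hu2 hu12 using hu
  have hcornep : ∀ c, ∀ t ∈ Tc c, ∀ x : c.supp, t ≠ (Rc c).p x ∧ t ≠ (Rc c).q x :=
    fun c => (hTgood c).1
  -- scales
  set n : G.ConnectedComponent → ℕ := fun c => (Fintype.equivFin G.ConnectedComponent c : ℕ)
    with hn
  have hninj : ∀ c d, n c = n d → c = d := fun c d h =>
    (Fintype.equivFin G.ConnectedComponent).injective (Fin.ext h)
  set lo : G.ConnectedComponent → ℝ := fun c => (2:ℝ)^(-(n c : ℤ) - 3) with hlo
  set hi : G.ConnectedComponent → ℝ := fun c => (2:ℝ)^(-(n c : ℤ) - 2) with hhi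
  have hlopos : ∀ c, 0 < lo c := fun c => zpow_pos (by norm_num) _
  have hlohi : ∀ c, lo c < hi c := fun c => zpow_lt_zpow_right₀ (by norm_num) (by omega)
  have hhile : ∀ c, hi c ≤ (1:ℝ)/4 := by
    intro c
    calc hi c ≤ (2:ℝ)^(-2 : ℤ) := zpow_le_zpow_right₀ (by norm_num) (by omega)
    _ = 1/4 := by norm_num
  have hnest : ∀ c d, n d < n c → hi c ≤ lo d := by
    intro c d h
    exact zpow_le_zpow_right₀ (by norm_num) (by omega)
  -- windows
  set w2 : G.ConnectedComponent → ℝ := fun c => lift 0 (u2 c) with hw2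
  have hw2coe : ∀ c, ((w2 c : ℝ) : Circ) = u2 c := fun c => lift_coe _ _
  set mm : G.ConnectedComponent → ℝ := fun c => lift (w2 c) (u1 c) with hmm
  have hmmcoe : ∀ c, ((mm c : ℝ) : Circ) = u1 c := fun c => lift_coe _ _
  have hlift_strict : ∀ c (z : Circ), z ≠ u2 c → lift (w2 c) z ∈ Set.Ioo (w2 c) (w2 c + 1) := by
    intro c z hz
    rcases (lift_mem (w2 c) z).1.lt_or_eq with h | h
    · exact ⟨h, (lift_mem _ _).2⟩
    · exact absurd (by rw [← lift_coe (w2 c) z, ← h, hw2coe c]) hz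
  have hmm1 : ∀ c, w2 c < mm c := by
    intro c
    exact (hlift_strict c (u1 c) (hu12 c)).1
  have hmm2 : ∀ c, mm c < w2 c + 1 := fun c => (lift_mem _ _).2
  have hlift_ne_mm : ∀ c (z : Circ), z ≠ u1 c → lift (w2 c) z ≠ mm c := by
    intro c z hz h
    exact hz (by rw [← lift_coe (w2 c) z, h, hmmcoe c])
  -- global coordinates
  set F : G.ConnectedComponent → Circ → ℝ :=
    fun c z => gmap (w2 c) (mm c) (lo c) (hi c) (lift (w2 c) z) with hF
  have hFmem : ∀ c (z : Circ), z ≠ u1 c → z ≠ u2 c →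
      F c z ∈ Set.Ioo (-(hi c)) (-(lo c)) ∪ Set.Ioo (lo c) (hi c) := fun c z h1 h2 =>
    gmap_mem (hmm1 c) (hlopos c) (hlohi c) (hlift_strict c z h2) (hlift_ne_mm c z h1)
  have hFsmall : ∀ c (z : Circ), z ≠ u1 c → z ≠ u2 c →
      (F c z ∈ Set.Ioo (-(1/4) : ℝ) (1/4) ∧ F c z ≠ 0) := by
    intro c z h1 h2
    have h3 := hFmem c z h1 h2
    have h4 := hlopos c
    have h5 := hlohi c
    have h6 := hhile c
    rcases h3 with ⟨ha, hb⟩ | ⟨ha, hb⟩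
    · exact ⟨⟨by linarith, by linarith⟩, by intro h; rw [h] at hb; linarith⟩
    · exact ⟨⟨by linarith, by linarith⟩, by intro h; rw [h] at ha; linarith⟩
  have hFwin : ∀ c (z : Circ), z ≠ u1 c → z ≠ u2 c →
      F c z ∈ Set.Ico (-(1/2) : ℝ) (-(1/2) + 1) := by
    intro c z h1 h2
    obtain ⟨⟨ha, hb⟩, -⟩ := hFsmall c z h1 h2
    rw [half_lt]
    exact ⟨by linarith, by linarith⟩
  have hpair : ∀ c (z z' : Circ), z ≠ u1 c → z ≠ u2 c → z' ≠ u1 c → z' ≠ u2 c →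
      (lift (w2 c) z < lift (w2 c) z' ↔ F c z < F c z') := fun c z z' h1 h2 h3 h4 =>
    gmap_pair_iff (hmm1 c) (hmm2 c) (hlopos c) (hlohi c)
      (hlift_strict c z h2) (hlift_strict c z' h4) (hlift_ne_mm c z h1) (hlift_ne_mm c z' h3)
  -- coordinates are injective (jointly in the component and the point)
  have hFinj : ∀ (c d : G.ConnectedComponent) (za zb : Circ),
      za ≠ u1 c → za ≠ u2 c → zb ≠ u1 d → zb ≠ u2 d →
      ((F c za : ℝ) : Circ) = ((F d zb : ℝ) : Circ) → c = d ∧ za = zb := by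
    intro c d za zb ha1 ha2 hb1 hb2 h
    have hco : F c za = F d zb :=
      (coe_inj (hFwin c za ha1 ha2) (hFwin d zb hb1 hb2)).1 h
    have hcd : c = d := by
      by_contra hcd
      have hnd : n c ≠ n d := fun hh => hcd (hninj _ _ hh)
      have hma := hFmem c za ha1 ha2
      have hmb := hFmem d zb hb1 hb2
      rcases lt_or_gt_of_ne hnd with hlt | hlt
      · have h1 := hnest d c hlt
        have h2 := hlopos c; have h3 := hlopos d
        have h4 := hlohi c; have h5 := hlohi d
        rcases hma with ⟨x1, x2⟩ | ⟨x1, x2⟩ <;> rcases hmb with ⟨y1, y2⟩ | ⟨y1, y2⟩ <;> linarith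
      · have h1 := hnest c d hlt
        have h2 := hlopos c; have h3 := hlopos d
        have h4 := hlohi c; have h5 := hlohi d
        rcases hma with ⟨x1, x2⟩ | ⟨x1, x2⟩ <;> rcases hmb with ⟨y1, y2⟩ | ⟨y1, y2⟩ <;> linarith
    subst hcd
    refine ⟨rfl, ?_⟩
    have hll : lift (w2 c) za = lift (w2 c) zb := by
      by_contra hll
      rcases lt_or_gt_of_ne hll with h' | h'
      · exact absurd hco ((hpair c za zb ha1 ha2 hb1 hb2).1 h').ne
      · exact absurd hco.symm ((hpair c zb za hb1 hb2 ha1 ha2).1 h').ne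
    exact lift_inj _ hll
  -- endpoints avoid the two special corners
  have hep1 : ∀ (c) (x : c.supp), (Rc c).p x ≠ u1 c ∧ (Rc c).p x ≠ u2 c :=
    fun c x => ⟨Ne.symm (hcornep c _ (hu1 c) x).1, Ne.symm (hcornep c _ (hu2 c) x).1⟩
  have hep2 : ∀ (c) (x : c.supp), (Rc c).q x ≠ u1 c ∧ (Rc c).q x ≠ u2 c :=
    fun c x => ⟨Ne.symm (hcornep c _ (hu1 c) x).2, Ne.symm (hcornep c _ (hu2 c) x).2⟩
  -- the glued chords
  have hsupp : ∀ v : V, v ∈ (G.connectedComponentMk v).supp :=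
    fun v => (SimpleGraph.ConnectedComponent.mem_supp_iff _ v).2 rfl
  set pg : V → Circ := fun v =>
    ((F (G.connectedComponentMk v) ((Rc _).p ⟨v, hsupp v⟩) : ℝ) : Circ) with hpg
  set qg : V → Circ := fun v =>
    ((F (G.connectedComponentMk v) ((Rc _).q ⟨v, hsupp v⟩) : ℝ) : Circ) with hqg
  -- rewriting to an arbitrary component index
  have hrw : ∀ (v : V) (c : G.ConnectedComponent) (h : G.connectedComponentMk v = c),
      ∃ hv : v ∈ c.supp, pg v = ((F c ((Rc c).p ⟨v, hv⟩) : ℝ) : Circ) ∧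
        qg v = ((F c ((Rc c).q ⟨v, hv⟩) : ℝ) : Circ) := by
    rintro v c rfl
    exact ⟨hsupp v, rfl, rfl⟩
  -- shorthand distinctness of coordinates within one component
  have hFne : ∀ (c : G.ConnectedComponent) (z z' : Circ), z ≠ u1 c → z ≠ u2 c →
      z' ≠ u1 c → z' ≠ u2 c → z ≠ z' → F c z ≠ F c z' := by
    intro c z z' h1 h2 h3 h4 hne h
    exact hne (hFinj c c z z' h1 h2 h3 h4 (congrArg _ h)).2
  -- injectivity of the glued endpoints
  have hinj : Function.Injective (Sum.elim pg qg) := by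
    rintro (a | a) (b | b) h <;> simp only [Sum.elim_inl, Sum.elim_inr, hpg, hqg] at h
    · obtain ⟨hcd, -⟩ := hFinj _ _ _ _ (hep1 _ _).1 (hep1 _ _).2 (hep1 _ _).1 (hep1 _ _).2 h
      obtain ⟨hvb, hb1, -⟩ := hrw b _ hcd.symm
      simp only [hpg] at hb1
      rw [hb1] at h
      obtain ⟨-, hz⟩ := hFinj _ _ _ _ (hep1 _ _).1 (hep1 _ _).2 (hep1 _ _).1 (hep1 _ _).2 h
      have := (Rc _).p_inj hz
      exact congrArg Sum.inl (congrArg Subtype.val this)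
    · obtain ⟨hcd, -⟩ := hFinj _ _ _ _ (hep1 _ _).1 (hep1 _ _).2 (hep2 _ _).1 (hep2 _ _).2 h
      obtain ⟨hvb, -, hb2⟩ := hrw b _ hcd.symm
      simp only [hqg] at hb2
      rw [hb2] at h
      obtain ⟨-, hz⟩ := hFinj _ _ _ _ (hep1 _ _).1 (hep1 _ _).2 (hep2 _ _).1 (hep2 _ _).2 h
      exact absurd hz (Rc _).pq_ne
    · obtain ⟨hcd, -⟩ := hFinj _ _ _ _ (hep2 _ _).1 (hep2 _ _).2 (hep1 _ _).1 (hep1 _ _).2 h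
      obtain ⟨hvb, hb1, -⟩ := hrw b _ hcd.symm
      simp only [hpg] at hb1
      rw [hb1] at h
      obtain ⟨-, hz⟩ := hFinj _ _ _ _ (hep2 _ _).1 (hep2 _ _).2 (hep1 _ _).1 (hep1 _ _).2 h
      exact absurd hz.symm (Rc _).pq_ne
    · obtain ⟨hcd, -⟩ := hFinj _ _ _ _ (hep2 _ _).1 (hep2 _ _).2 (hep2 _ _).1 (hep2 _ _).2 h
      obtain ⟨hvb, -, hb2⟩ := hrw b _ hcd.symm
      simp only [hqg] at hb2
      rw [hb2] at h
      obtain ⟨-, hz⟩ := hFinj _ _ _ _ (hep2 _ _).1 (hep2 _ _).2 (hep2 _ _).1 (hep2 _ _).2 h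
      have := (Rc _).q_inj hz
      exact congrArg Sum.inr (congrArg Subtype.val this)
  -- adjacency of the glued representation
  have hadj : ∀ u v : V, G.Adj u v ↔ u ≠ v ∧
      Xor' (sbtw (pg v) (pg u) (qg v)) (sbtw (pg v) (qg u) (qg v)) := by
    intro u v
    by_cases hcc : G.connectedComponentMk v = G.connectedComponentMk u
    · -- same component
      obtain ⟨hvv, hv1, hv2⟩ := hrw v _ hcc
      have hu1' : pg u = ((F (G.connectedComponentMk u)
          ((Rc _).p ⟨u, hsupp u⟩) : ℝ) : Circ) := rfl
      have hu2' : qg u = ((F (G.connectedComponentMk u)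
          ((Rc _).q ⟨u, hsupp u⟩) : ℝ) : Circ) := rfl
      set c := G.connectedComponentMk u with hc
      set xu : c.supp := ⟨u, hsupp u⟩ with hxu
      set xv : c.supp := ⟨v, hvv⟩ with hxv
      have hL : G.Adj u v ↔ (G.induce c.supp).Adj xu xv := by
        simp [SimpleGraph.comap_adj, hxu, hxv]
      rw [hL, (Rc c).adj_iff_cyc (w2 c)]
      have hXor : u ≠ v →
          (Xor' (sbtw (pg v) (pg u) (qg v)) (sbtw (pg v) (qg u) (qg v)) ↔
           Xor' (Cyc ((Rc c).lp (w2 c) xv) ((Rc c).lp (w2 c) xu) ((Rc c).lq (w2 c) xv))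
                (Cyc ((Rc c).lp (w2 c) xv) ((Rc c).lq (w2 c) xu) ((Rc c).lq (w2 c) xv))) := by
        intro hne
        have hxne : xu ≠ xv := fun h => hne (congrArg Subtype.val h)
        have dpp : (Rc c).p xv ≠ (Rc c).p xu := fun h => hxne ((Rc c).p_inj h).symm
        have dpq : (Rc c).p xv ≠ (Rc c).q xu := (Rc c).pq_ne
        have dqp : (Rc c).q xv ≠ (Rc c).p xu := fun h => (Rc c).pq_ne h.symm
        have dqq : (Rc c).q xv ≠ (Rc c).q xu := fun h => hxne ((Rc c).q_inj h).symm
        have dvv : (Rc c).p xv ≠ (Rc c).q xv := fun h => (Rc c).pq_ne h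
        have e1 : sbtw (pg v) (pg u) (qg v) ↔
            Cyc (F c ((Rc c).p xv)) (F c ((Rc c).p xu)) (F c ((Rc c).q xv)) := by
          rw [hv1, hu1', hv2]
          exact sbtw_iff_cyc (hFwin _ _ (hep1 _ _).1 (hep1 _ _).2)
            (hFwin _ _ (hep1 _ _).1 (hep1 _ _).2) (hFwin _ _ (hep2 _ _).1 (hep2 _ _).2)
            (hFne c _ _ (hep1 _ _).1 (hep1 _ _).2 (hep1 _ _).1 (hep1 _ _).2 dpp)
            (hFne c _ _ (hep1 _ _).1 (hep1 _ _).2 (hep2 _ _).1 (hep2 _ _).2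
              (fun h => dqp h.symm))
            (hFne c _ _ (hep1 _ _).1 (hep1 _ _).2 (hep2 _ _).1 (hep2 _ _).2 dvv)
        have e2 : sbtw (pg v) (qg u) (qg v) ↔
            Cyc (F c ((Rc c).p xv)) (F c ((Rc c).q xu)) (F c ((Rc c).q xv)) := by
          rw [hv1, hu2', hv2]
          exact sbtw_iff_cyc (hFwin _ _ (hep1 _ _).1 (hep1 _ _).2)
            (hFwin _ _ (hep2 _ _).1 (hep2 _ _).2) (hFwin _ _ (hep2 _ _).1 (hep2 _ _).2)
            (hFne c _ _ (hep1 _ _).1 (hep1 _ _).2 (hep2 _ _).1 (hep2 _ _).2 dpq)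
            (hFne c _ _ (hep2 _ _).1 (hep2 _ _).2 (hep2 _ _).1 (hep2 _ _).2
              (fun h => dqq h.symm))
            (hFne c _ _ (hep1 _ _).1 (hep1 _ _).2 (hep2 _ _).1 (hep2 _ _).2 dvv)
        have m1 : Cyc ((Rc c).lp (w2 c) xv) ((Rc c).lp (w2 c) xu) ((Rc c).lq (w2 c) xv) ↔
            Cyc (F c ((Rc c).p xv)) (F c ((Rc c).p xu)) (F c ((Rc c).q xv)) :=
          cyc_map (hpair c _ _ (hep1 _ _).1 (hep1 _ _).2 (hep1 _ _).1 (hep1 _ _).2)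
            (hpair c _ _ (hep1 _ _).1 (hep1 _ _).2 (hep2 _ _).1 (hep2 _ _).2)
            (hpair c _ _ (hep2 _ _).1 (hep2 _ _).2 (hep1 _ _).1 (hep1 _ _).2)
        have m2 : Cyc ((Rc c).lp (w2 c) xv) ((Rc c).lq (w2 c) xu) ((Rc c).lq (w2 c) xv) ↔
            Cyc (F c ((Rc c).p xv)) (F c ((Rc c).q xu)) (F c ((Rc c).q xv)) :=
          cyc_map (hpair c _ _ (hep1 _ _).1 (hep1 _ _).2 (hep2 _ _).1 (hep2 _ _).2)
            (hpair c _ _ (hep2 _ _).1 (hep2 _ _).2 (hep2 _ _).1 (hep2 _ _).2)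
            (hpair c _ _ (hep2 _ _).1 (hep2 _ _).2 (hep1 _ _).1 (hep1 _ _).2)
        rw [e1, e2, m1, m2]
      constructor
      · rintro ⟨hxne, hx⟩
        have hne : u ≠ v := fun h => hxne (Subtype.ext h)
        exact ⟨hne, (hXor hne).2 hx⟩
      · rintro ⟨hne, hx⟩
        exact ⟨fun h => hne (congrArg Subtype.val h), (hXor hne).1 hx⟩
    · -- different components
      have hL : ¬ G.Adj u v := fun h =>
        hcc (SimpleGraph.ConnectedComponent.sound h.symm.reachable)
      simp only [hL, false_iff, not_and]
      intro hne
      obtain ⟨hvv, hv1, hv2⟩ := hrw v _ rfl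
      have hu1' : pg u = ((F (G.connectedComponentMk u)
          ((Rc _).p ⟨u, hsupp u⟩) : ℝ) : Circ) := rfl
      have hu2' : qg u = ((F (G.connectedComponentMk u)
          ((Rc _).q ⟨u, hsupp u⟩) : ℝ) : Circ) := rfl
      set c := G.connectedComponentMk u with hc
      set d := G.connectedComponentMk v with hd
      set xu : c.supp := ⟨u, hsupp u⟩ with hxu
      set xv : d.supp := ⟨v, hsupp v⟩ with hxv
      have hdc : d ≠ c := hcc
      have hcross_ne : ∀ (za zb : Circ), za ≠ u1 d → za ≠ u2 d → zb ≠ u1 c → zb ≠ u2 c →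
          F d za ≠ F c zb := by
        intro za zb a1 a2 b1 b2 h
        exact hdc (hFinj d c za zb a1 a2 b1 b2 (congrArg _ h)).1
      have dvv : (Rc d).p xv ≠ (Rc d).q xv := fun h => (Rc d).pq_ne h
      have e1 : sbtw (pg v) (pg u) (qg v) ↔
          Cyc (F d ((Rc d).p xv)) (F c ((Rc c).p xu)) (F d ((Rc d).q xv)) := by
        rw [hv1, hu1', hv2]
        exact sbtw_iff_cyc (hFwin _ _ (hep1 _ _).1 (hep1 _ _).2)
          (hFwin _ _ (hep1 _ _).1 (hep1 _ _).2) (hFwin _ _ (hep2 _ _).1 (hep2 _ _).2)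
          (hcross_ne _ _ (hep1 _ _).1 (hep1 _ _).2 (hep1 _ _).1 (hep1 _ _).2)
          (Ne.symm (hcross_ne _ _ (hep2 _ _).1 (hep2 _ _).2 (hep1 _ _).1 (hep1 _ _).2))
          (hFne d _ _ (hep1 _ _).1 (hep1 _ _).2 (hep2 _ _).1 (hep2 _ _).2 dvv)
      have e2 : sbtw (pg v) (qg u) (qg v) ↔
          Cyc (F d ((Rc d).p xv)) (F c ((Rc c).q xu)) (F d ((Rc d).q xv)) := by
        rw [hv1, hu2', hv2]
        exact sbtw_iff_cyc (hFwin _ _ (hep1 _ _).1 (hep1 _ _).2)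
          (hFwin _ _ (hep2 _ _).1 (hep2 _ _).2) (hFwin _ _ (hep2 _ _).1 (hep2 _ _).2)
          (hcross_ne _ _ (hep1 _ _).1 (hep1 _ _).2 (hep2 _ _).1 (hep2 _ _).2)
          (Ne.symm (hcross_ne _ _ (hep2 _ _).1 (hep2 _ _).2 (hep2 _ _).1 (hep2 _ _).2))
          (hFne d _ _ (hep1 _ _).1 (hep1 _ _).2 (hep2 _ _).1 (hep2 _ _).2 dvv)
      -- both endpoints of u lie on the same side of the chord of v
      have hreg : ∀ x : ℝ, x ∈ Set.Ioo (-(hi c)) (-(lo c)) ∪ Set.Ioo (lo c) (hi c) →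
          ∀ y : ℝ, y ∈ Set.Ioo (-(hi c)) (-(lo c)) ∪ Set.Ioo (lo c) (hi c) →
          (Cyc (F d ((Rc d).p xv)) x (F d ((Rc d).q xv)) ↔
           Cyc (F d ((Rc d).p xv)) y (F d ((Rc d).q xv))) := by
        intro x hx y hy
        have hFv1 := hFmem d _ (hep1 d xv).1 (hep1 d xv).2
        have hFv2 := hFmem d _ (hep2 d xv).1 (hep2 d xv).2
        have hvne : F d ((Rc d).p xv) ≠ F d ((Rc d).q xv) :=
          hFne d _ _ (hep1 _ _).1 (hep1 _ _).2 (hep2 _ _).1 (hep2 _ _).2 dvv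
        have hlod := hlopos d; have hhid := hlohi d
        have hloc := hlopos c; have hhic := hlohi c
        have hnd : n c ≠ n d := fun hh => hdc (hninj d c hh.symm)
        rcases lt_or_gt_of_ne hnd with hlt | hlt
        · -- u's component is outside
          have h1 := hnest d c hlt
          apply cyc_const_outer (α := -(hi d)) (β := hi d) hvne
          · rcases hFv1 with ⟨a1, a2⟩ | ⟨a1, a2⟩ <;> constructor <;> linarith
          · rcases hFv2 with ⟨a1, a2⟩ | ⟨a1, a2⟩ <;> constructor <;> linarith
          · rcases hx with ⟨a1, a2⟩ | ⟨a1, a2⟩ <;> [left; right] <;> linarith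
          · rcases hy with ⟨a1, a2⟩ | ⟨a1, a2⟩ <;> [left; right] <;> linarith
        · -- u's component is inside
          have h1 := hnest c d hlt
          apply cyc_const_inner (α := -(lo d)) (β := lo d) hvne
          · rcases hFv1 with ⟨a1, a2⟩ | ⟨a1, a2⟩ <;> [left; right] <;> linarith
          · rcases hFv2 with ⟨a1, a2⟩ | ⟨a1, a2⟩ <;> [left; right] <;> linarith
          · rcases hx with ⟨a1, a2⟩ | ⟨a1, a2⟩ <;> constructor <;> linarith
          · rcases hy with ⟨a1, a2⟩ | ⟨a1, a2⟩ <;> constructor <;> linarith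
      have hsame : sbtw (pg v) (pg u) (qg v) ↔ sbtw (pg v) (qg u) (qg v) := by
        rw [e1, e2]
        exact hreg _ (hFmem c _ (hep1 c xu).1 (hep1 c xu).2)
          _ (hFmem c _ (hep2 c xu).1 (hep2 c xu).2)
      intro hx
      unfold Xor' Xor at hx
      tauto
  set Rg : CircleRep V G := ⟨pg, qg, hinj, hadj⟩ with hRgdef
  set cz : Circ := ((0:ℝ) : Circ) with hcz
  set cw : Circ := ((-(1/2) : ℝ) : Circ) with hcw
  have h0win : (0:ℝ) ∈ Set.Ico (-(1/2) : ℝ) (-(1/2) + 1) := by rw [half_lt]; norm_num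
  have hwwin : (-(1/2) : ℝ) ∈ Set.Ico (-(1/2) : ℝ) (-(1/2) + 1) := by rw [half_lt]; norm_num
  have hlift0 : lift (-(1/2)) cz = 0 := lift_coe_self h0win
  have hliftw : lift (-(1/2)) cw = -(1/2) := lift_coe_self hwwin
  set Timg : G.ConnectedComponent → Finset Circ :=
    fun c => (((Tc c).erase (u1 c)).erase (u2 c)).image (fun t => ((F c t : ℝ) : Circ))
    with hTimg
  set Tglob : Finset Circ := insert cz (insert cw (Finset.univ.biUnion Timg)) with hTglob
  have hmem_img : ∀ {c t'}, t' ∈ Timg c →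
      ∃ t ∈ Tc c, t ≠ u1 c ∧ t ≠ u2 c ∧ t' = ((F c t : ℝ) : Circ) := by
    intro c t' ht'
    rw [hTimg] at ht'
    simp only [Finset.mem_image, Finset.mem_erase] at ht'
    obtain ⟨t, ⟨h2, h1, hmem⟩, rfl⟩ := ht'
    exact ⟨t, hmem, h1, h2, rfl⟩
  -- corners avoid endpoints
  have hav : ∀ t ∈ Tglob, ∀ v : V, t ≠ Rg.p v ∧ t ≠ Rg.q v := by
    intro t ht v
    rcases Finset.mem_insert.1 ht with rfl | ht
    · constructor
      · intro h
        have : (0:ℝ) = F _ ((Rc _).p ⟨v, hsupp v⟩) :=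
          (coe_inj h0win (hFwin _ _ (hep1 _ _).1 (hep1 _ _).2)).1 h
        exact (hFsmall _ _ (hep1 _ _).1 (hep1 _ _).2).2 this.symm
      · intro h
        have : (0:ℝ) = F _ ((Rc _).q ⟨v, hsupp v⟩) :=
          (coe_inj h0win (hFwin _ _ (hep2 _ _).1 (hep2 _ _).2)).1 h
        exact (hFsmall _ _ (hep2 _ _).1 (hep2 _ _).2).2 this.symm
    rcases Finset.mem_insert.1 ht with rfl | ht
    · constructor
      · intro h
        have h2 : (-(1/2) : ℝ) = F _ ((Rc _).p ⟨v, hsupp v⟩) :=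
          (coe_inj hwwin (hFwin _ _ (hep1 _ _).1 (hep1 _ _).2)).1 h
        have h3 := (hFsmall (G.connectedComponentMk v) ((Rc _).p ⟨v, hsupp v⟩)
          (hep1 _ _).1 (hep1 _ _).2).1.1
        rw [← h2] at h3
        linarith
      · intro h
        have h2 : (-(1/2) : ℝ) = F _ ((Rc _).q ⟨v, hsupp v⟩) :=
          (coe_inj hwwin (hFwin _ _ (hep2 _ _).1 (hep2 _ _).2)).1 h
        have h3 := (hFsmall (G.connectedComponentMk v) ((Rc _).q ⟨v, hsupp v⟩)
          (hep2 _ _).1 (hep2 _ _).2).1.1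
        rw [← h2] at h3
        linarith
    · obtain ⟨c, -, htc⟩ := Finset.mem_biUnion.1 ht
      obtain ⟨s, hsmem, hs1, hs2, rfl⟩ := hmem_img htc
      constructor
      · intro h
        obtain ⟨hcd, hz⟩ := hFinj c _ s _ hs1 hs2 (hep1 _ _).1 (hep1 _ _).2 h
        obtain ⟨hv', hb1, -⟩ := hrw v c hcd.symm
        simp only [hpg] at hb1
        have h' : ((F c s : ℝ) : Circ) = ((F c ((Rc c).p ⟨v, hv'⟩) : ℝ) : Circ) := by
          rw [← hb1]; exact h
        obtain ⟨-, hz'⟩ := hFinj c c s _ hs1 hs2 (hep1 _ _).1 (hep1 _ _).2 h'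
        exact (hcornep c s hsmem ⟨v, hv'⟩).1 hz'
      · intro h
        obtain ⟨hcd, hz⟩ := hFinj c _ s _ hs1 hs2 (hep2 _ _).1 (hep2 _ _).2 h
        obtain ⟨hv', -, hb2⟩ := hrw v c hcd.symm
        simp only [hqg] at hb2
        have h' : ((F c s : ℝ) : Circ) = ((F c ((Rc c).q ⟨v, hv'⟩) : ℝ) : Circ) := by
          rw [← hb2]; exact h
        obtain ⟨-, hz'⟩ := hFinj c c s _ hs1 hs2 (hep2 _ _).1 (hep2 _ _).2 h'
        exact (hcornep c s hsmem ⟨v, hv'⟩).2 hz'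
  -- arc satisfaction: the generic one-sided claim
  have harc : ∀ (c : G.ConnectedComponent) (P Q : Circ),
      P ≠ u1 c → P ≠ u2 c → Q ≠ u1 c → Q ≠ u2 c →
      (∃ t ∈ Tc c, Cyc (lift (w2 c) P) (lift (w2 c) t) (lift (w2 c) Q)) →
      ∃ t' ∈ Tglob, Cyc (F c P) (lift (-(1/2)) t') (F c Q) := by
    intro c P Q hP1 hP2 hQ1 hQ2 ⟨t, htTc, hcyc⟩
    obtain ⟨haL, haR⟩ := hlift_strict c P hP2
    obtain ⟨hbL, hbR⟩ := hlift_strict c Q hQ2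
    have ham := hlift_ne_mm c P hP1
    have hbm := hlift_ne_mm c Q hQ1
    have hFP := hFsmall c P hP1 hP2
    have hFQ := hFsmall c Q hQ1 hQ2
    have hmw : lift (w2 c) (u2 c) = w2 c := by
      rw [← hw2coe c]
      exact lift_coe_self ⟨le_refl _, by linarith⟩
    have hmmrfl : lift (w2 c) (u1 c) = mm c := rfl
    have hcwmem : cw ∈ Tglob := Finset.mem_insert_of_mem (Finset.mem_insert_self _ _)
    have hczmem : cz ∈ Tglob := Finset.mem_insert_self _ _
    -- the "wrap" corner cw works whenever lift Q < lift P
    have hwrap : lift (w2 c) Q < lift (w2 c) P →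
        ∃ t' ∈ Tglob, Cyc (F c P) (lift (-(1/2)) t') (F c Q) := by
      intro hlt
      refine ⟨cw, hcwmem, ?_⟩
      rw [hliftw]
      have hFlt : F c Q < F c P := (hpair c Q P hQ1 hQ2 hP1 hP2).1 hlt
      have := hFQ.1.1
      exact Or.inr (Or.inl ⟨by linarith, hFlt⟩)
    by_cases ht1 : t = u1 c
    · subst ht1
      rw [hmmrfl] at hcyc
      rcases hcyc with ⟨h1, h2⟩ | ⟨h1, h2⟩ | ⟨h1, h2⟩
      · -- P-lift < mm < Q-lift : corner 0
        refine ⟨cz, hczmem, ?_⟩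
        rw [hlift0]
        have g1 := gmap_left (hlohi c) (⟨haL, h1⟩ : lift (w2 c) P ∈ Set.Ioo (w2 c) (mm c))
        have g2 := gmap_right (hlohi c) (⟨h2, hbR⟩ : lift (w2 c) Q ∈ Set.Ioo (mm c) (w2 c + 1))
        have := hlopos c
        exact Or.inl ⟨by rw [hF]; exact lt_trans g1.2 (by linarith),
          by rw [hF]; exact lt_trans (by linarith) g2.1⟩
      · exact hwrap h2
      · exact hwrap h1
    by_cases ht2 : t = u2 c
    · subst ht2
      rw [hmw] at hcyc
      rcases hcyc with ⟨h1, h2⟩ | ⟨h1, h2⟩ | ⟨h1, h2⟩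
      · exact absurd h1 (not_lt.2 haL.le)
      · exact hwrap h2
      · exact absurd h2 (not_lt.2 haL.le)
    · -- ordinary corner
      refine ⟨((F c t : ℝ) : Circ), ?_, ?_⟩
      · refine Finset.mem_insert_of_mem (Finset.mem_insert_of_mem ?_)
        refine Finset.mem_biUnion.2 ⟨c, Finset.mem_univ c, ?_⟩
        rw [hTimg]
        exact Finset.mem_image_of_mem _
          (Finset.mem_erase.2 ⟨ht2, Finset.mem_erase.2 ⟨ht1, htTc⟩⟩)
      · rw [lift_coe_self (hFwin c t ht1 ht2)]
        exact (cyc_map (hpair c P t hP1 hP2 ht1 ht2) (hpair c t Q ht1 ht2 hQ1 hQ2)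
          (hpair c Q P hQ1 hQ2 hP1 hP2)).1 hcyc
  -- arc satisfaction
  have hsat : ∀ v : V, Rg.SatChord Tglob v := by
    intro v
    set c := G.connectedComponentMk v with hcdef
    set x : c.supp := ⟨v, hsupp v⟩ with hx
    have hlpg : Rg.lp (-(1/2)) v = F c ((Rc c).p x) :=
      lift_coe_self (hFwin _ _ (hep1 _ _).1 (hep1 _ _).2)
    have hlqg : Rg.lq (-(1/2)) v = F c ((Rc c).q x) :=
      lift_coe_self (hFwin _ _ (hep2 _ _).1 (hep2 _ _).2)
    constructor
    · obtain ⟨t, htTc, hta⟩ := ((hTgood c).2 x).1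
      have htne := hcornep c t htTc x
      rw [(Rc c).mem_arc_true_iff (w2 c) htne.1 htne.2] at hta
      obtain ⟨t', ht'm, ht'c⟩ := harc c ((Rc c).p x) ((Rc c).q x)
        (hep1 _ _).1 (hep1 _ _).2 (hep2 _ _).1 (hep2 _ _).2 ⟨t, htTc, hta⟩
      refine ⟨t', ht'm, ?_⟩
      rw [Rg.mem_arc_true_iff (-(1/2)) (hav t' ht'm v).1 (hav t' ht'm v).2, hlpg, hlqg]
      exact ht'c
    · obtain ⟨t, htTc, hta⟩ := ((hTgood c).2 x).2
      have htne := hcornep c t htTc x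
      rw [(Rc c).mem_arc_false_iff (w2 c) htne.1 htne.2] at hta
      obtain ⟨t', ht'm, ht'c⟩ := harc c ((Rc c).q x) ((Rc c).p x)
        (hep2 _ _).1 (hep2 _ _).2 (hep1 _ _).1 (hep1 _ _).2 ⟨t, htTc, hta⟩
      refine ⟨t', ht'm, ?_⟩
      rw [Rg.mem_arc_false_iff (-(1/2)) (hav t' ht'm v).1 (hav t' ht'm v).2, hlpg, hlqg]
      exact ht'c
  -- counting
  have hupper : polygonNumber G ≤ Tglob.card :=
    polygonNumber_le_card Rg Tglob ⟨hav, hsat⟩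
  have hcard1 : ∀ c, (Timg c).card ≤ (Tc c).card - 2 := by
    intro c
    rw [hTimg]
    refine le_trans (Finset.card_image_le) ?_
    rw [Finset.card_erase_of_mem (Finset.mem_erase.2 ⟨(hu12 c).symm, hu2 c⟩),
      Finset.card_erase_of_mem (hu1 c)]
    omega
  have hcard : Tglob.card ≤ 2 + ∑ c : G.ConnectedComponent, ((Tc c).card - 2) := by
    rw [hTglob]
    refine le_trans (Finset.card_insert_le _ _) ?_
    have h2 := Finset.card_insert_le cw (Finset.univ.biUnion Timg)
    have h3 := Finset.card_biUnion_le (s := (Finset.univ : Finset G.ConnectedComponent))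
      (t := Timg)
    have h4 : ∑ c, (Timg c).card ≤ ∑ c : G.ConnectedComponent, ((Tc c).card - 2) :=
      Finset.sum_le_sum fun c _ => hcard1 c
    omega
  have hsum2 : (∑ c : G.ConnectedComponent, ((Tc c).card - 2)) +
      2 * Fintype.card G.ConnectedComponent = ∑ c : G.ConnectedComponent, (Tc c).card := by
    have h2r : 2 * Fintype.card G.ConnectedComponent = ∑ _c : G.ConnectedComponent, 2 := by
      rw [Finset.sum_const, smul_eq_mul, Fintype.card]
      ring
    rw [h2r, ← Finset.sum_add_distrib]
    exact Finset.sum_congr rfl fun c _ => Nat.sub_add_cancel (h2le c)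
  have hψ : ∑ c : G.ConnectedComponent, (Tc c).card =
      ∑ c : G.ConnectedComponent, polygonNumber (G.induce c.supp) :=
    Finset.sum_congr rfl fun c _ => hTcard c
  omega

end PartB

/-- For any circle graph `G` with connected components `G_1, …, G_r`,
`ψ(G) = (Σ ψ(G_i)) − 2(r−1)`. -/
theorem stmt0 {V : Type} [Fintype V] [DecidableEq V] (G : SimpleGraph V)
    [DecidableRel G.Adj] [Fintype G.ConnectedComponent]
    (hcirc : Nonempty (CircleRep V G)) (hne : Nonempty V) :
    polygonNumber G =
      (∑ c : G.ConnectedComponent, polygonNumber (G.induce c.supp)) -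
        2 * (Fintype.card G.ConnectedComponent - 1) := by
  classical
  haveI : Nonempty G.ConnectedComponent := ⟨G.connectedComponentMk hne.some⟩
  obtain ⟨Rg, T, hTcard, hTgood⟩ := polygonNumber_attained hcirc
  have hLB := partA Rg (Finset.univ.card) T hTgood.1 Finset.univ Finset.univ_nonempty
    le_rfl (fun v _ => hTgood.2 v)
  rw [hTcard, Finset.card_univ] at hLB
  have hUB := partB hcirc
  have hr : 1 ≤ Fintype.card G.ConnectedComponent := Fintype.card_pos
  omega
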